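/- arXiv:1905.04193 — 6 statements merged into one kernel-verified Lean document; each statement's English description precedes it below -/
import Mathlib

section
/- Let g : ℂ → ℂ be analytic on the region |s| ≥ 3/2, and suppose there are a positive integer d, a real α > 0 and a constant C > 0 such that max_{|s|=r} |g(s)| ≤ C Γ(r)^{d}/α^{r} for all r ≥ 3/2. Then there is a constant C' > 0 such that for every nonnegative integer k and every real r ≥ 2, max_{|s|=r} |g^{(k)}(s)|/k! ≤ C' · 2^{k+1} · Γ(r+1)^{d}/α^{r}. -/
open Complex

/-- Bounds on derivatives from the growth condition: if `g` is analytic on `|s| ≥ 3/2`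
and `max_{|s|=r} |g(s)| ≤ C Γ(r)^d / α^r` for `r ≥ 3/2`, then
`max_{|s|=r} |g^{(k)}(s)|/k! ≤ C' 2^{k+1} Γ(r+1)^d / α^r` for all `k` and `r ≥ 2`. -/
theorem derivative_growth_bound (g : ℂ → ℂ)
    (hg : ∀ s : ℂ, 3 / 2 ≤ ‖s‖ → AnalyticAt ℂ g s)
    (d : ℕ) (hd : 0 < d) (α : ℝ) (hα : 0 < α) (C : ℝ) (hC : 0 < C)
    (hgrowth : ∀ r : ℝ, 3 / 2 ≤ r → ∀ s : ℂ, ‖s‖ = r →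
      ‖g s‖ ≤ C * Real.Gamma r ^ d / α ^ r) :
    ∃ C' : ℝ, 0 < C' ∧ ∀ k : ℕ, ∀ r : ℝ, 2 ≤ r → ∀ s : ℂ, ‖s‖ = r →
      ‖iteratedDeriv k g s‖ / (Nat.factorial k) ≤
        C' * 2 ^ (k + 1) * Real.Gamma (r + 1) ^ d / α ^ r := by
  classical
  set m : ℝ := max (α ^ (2⁻¹ : ℝ)) (α ^ (-2⁻¹ : ℝ)) with hm
  have hmpos : 0 < m := lt_max_iff.2 (Or.inl (Real.rpow_pos_of_pos hα _))
  refine ⟨C * m, mul_pos hC hmpos, ?_⟩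
  intro k r hr s hs
  have hαr : 0 < α ^ r := Real.rpow_pos_of_pos hα r
  have hΓpos : 0 < Real.Gamma (r + 1) := Real.Gamma_pos_of_pos (by linarith)
  set M : ℝ := C * m * Real.Gamma (r + 1) ^ d / α ^ r with hM
  have hMpos : 0 < M := by
    apply div_pos _ hαr
    exact mul_pos (mul_pos hC hmpos) (pow_pos hΓpos d)
  -- any point within 1/2 of the circle |s| = r has |w| ≥ 3/2
  have habs : ∀ w : ℂ, ‖w - s‖ ≤ 1 / 2 → 3 / 2 ≤ ‖w‖ := by
    intro w hw
    have h1 : ‖s‖ - ‖w‖ ≤ ‖s - w‖ := by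
      exact norm_sub_norm_le s w
    have h2 : ‖s - w‖ = ‖w - s‖ := by
      rw [← norm_neg, neg_sub]
    rw [hs, h2] at h1
    linarith
  -- the key bound on the circle |w - s| = 1/2
  have key : ∀ w : ℂ, ‖w - s‖ = 1 / 2 → ‖g w‖ ≤ M := by
    intro w hw
    have hwle : ‖w‖ ≤ r + 1 / 2 := by
      have h0 : ‖w‖ - ‖s‖ ≤ ‖w - s‖ := by
        exact norm_sub_norm_le w s
      rw [hs, hw] at h0; linarith
    have hwge : r - 1 / 2 ≤ ‖w‖ := by
      have h1 : ‖s‖ - ‖w‖ ≤ ‖s - w‖ := by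
        exact norm_sub_norm_le s w
      have h2 : ‖s - w‖ = ‖w - s‖ := by
        rw [← norm_neg, neg_sub]
      rw [hs, h2, hw] at h1; linarith
    have hw32 : 3 / 2 ≤ ‖w‖ := by linarith
    have hgw := hgrowth (‖w‖) hw32 w rfl
    -- Gamma bound
    have hΓ : Real.Gamma (‖w‖) ≤ Real.Gamma (r + 1) := by
      have hmono := Real.Gamma_strictMonoOn_Ici.monotoneOn
      rcases le_or_gt 2 (‖w‖) with h2 | h2
      · exact hmono (Set.mem_Ici.2 h2) (Set.mem_Ici.2 (by linarith)) (by linarith)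
      · have hpos := Real.Gamma_pos_of_pos (show (0:ℝ) < ‖w‖ by linarith)
        have hx : Real.Gamma (‖w‖) ≤ Real.Gamma (‖w‖ + 1) := by
          rw [Real.Gamma_add_one (by linarith : ‖w‖ ≠ 0)]
          nlinarith
        refine hx.trans (hmono (Set.mem_Ici.2 (by linarith)) (Set.mem_Ici.2 (by linarith))
          (by linarith))
    -- rpow bound
    have hα' : (α ^ (‖w‖ : ℝ))⁻¹ ≤ m / α ^ r := by
      have hαw : 0 < α ^ (‖w‖ : ℝ) := Real.rpow_pos_of_pos hα _
      rw [div_eq_mul_inv, ← Real.rpow_neg hα.le, ← Real.rpow_neg hα.le]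
      have : α ^ (-(‖w‖) : ℝ) = α ^ (r - ‖w‖) * α ^ (-r : ℝ) := by
        rw [← Real.rpow_add hα]; ring_nf
      rw [this]
      have hbound : α ^ (r - ‖w‖) ≤ m := by
        rcases le_total 1 α with h1 | h1
        · exact le_trans (Real.rpow_le_rpow_of_exponent_le h1 (by linarith)) (le_max_left _ _)
        · exact le_trans (Real.rpow_le_rpow_of_exponent_ge hα h1 (by linarith)) (le_max_right _ _)
      exact mul_le_mul_of_nonneg_right hbound (Real.rpow_pos_of_pos hα _).le
    have hΓw : (0:ℝ) ≤ Real.Gamma (‖w‖) :=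
      (Real.Gamma_pos_of_pos (by linarith)).le
    calc ‖g w‖ ≤ C * Real.Gamma (‖w‖) ^ d / α ^ (‖w‖ : ℝ) := hgw
      _ = C * Real.Gamma (‖w‖) ^ d * (α ^ (‖w‖ : ℝ))⁻¹ :=
          div_eq_mul_inv _ _
      _ ≤ C * Real.Gamma (r + 1) ^ d * (m / α ^ r) := by
          refine mul_le_mul (mul_le_mul_of_nonneg_left
            (pow_le_pow_left₀ hΓw hΓ d) hC.le) hα' (by positivity) (by positivity)
      _ = M := by rw [hM]; ring
  -- differentiability on the closed ball
  have hdiff : DifferentiableOn ℂ g (Metric.closedBall s (1 / 2)) := by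
    intro w hw
    have hw' : ‖w - s‖ ≤ 1 / 2 := by
      rw [Metric.mem_closedBall, Complex.dist_eq] at hw; exact hw
    exact ((hg w (habs w hw')).differentiableAt).differentiableWithinAt
  have hdc : DiffContOnCl ℂ g (Metric.ball s (1 / 2)) := by
    refine ⟨hdiff.mono Metric.ball_subset_closedBall, ?_⟩
    rw [closure_ball s (by norm_num : (1 / 2 : ℝ) ≠ 0)]
    exact hdiff.continuousOn
  -- power series
  have hdc' : DiffContOnCl ℂ g (Metric.ball s ((1 / 2 : NNReal) : ℝ)) := by
    have : ((1 / 2 : NNReal) : ℝ) = 1 / 2 := by norm_num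
    rw [this]; exact hdc
  have hps := hdc'.hasFPowerSeriesOnBall (by norm_num : 0 < (1 / 2 : NNReal))
  have hcoe : ((1 / 2 : NNReal) : ℝ) = 1 / 2 := by norm_num
  rw [hcoe] at hps
  set p := cauchyPowerSeries g s (1 / 2) with hp
  -- coefficient bound
  have hgc : Continuous fun θ : ℝ => ‖g (circleMap s (1 / 2) θ)‖ := by
    refine Continuous.norm ?_
    refine continuous_iff_continuousAt.2 fun θ => ?_
    refine ((hg _ ?_).continuousAt).comp (continuous_circleMap s (1 / 2)).continuousAt
    apply habs
    rw [circleMap_sub_center, norm_circleMap_zero,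
      abs_of_pos (by norm_num : (0:ℝ) < 1 / 2)]
  have hint : (∫ θ in (0:ℝ)..2 * Real.pi, ‖g (circleMap s (1 / 2) θ)‖) ≤ 2 * Real.pi * M := by
    have h1 : (∫ θ in (0:ℝ)..2 * Real.pi, ‖g (circleMap s (1 / 2) θ)‖) ≤
        ∫ _θ in (0:ℝ)..2 * Real.pi, M := by
      refine intervalIntegral.integral_mono_on Real.two_pi_pos.le
        (hgc.intervalIntegrable _ _) intervalIntegrable_const fun θ _ => ?_
      refine key _ ?_
      rw [circleMap_sub_center, norm_circleMap_zero,
        abs_of_pos (by norm_num : (0:ℝ) < 1 / 2)]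
    rw [intervalIntegral.integral_const, smul_eq_mul, sub_zero] at h1
    linarith
  have hcoef : ‖p k‖ ≤ M * 2 ^ k := by
    refine (norm_cauchyPowerSeries_le g s (1 / 2) k).trans ?_
    have h2 : |(1 / 2 : ℝ)|⁻¹ ^ k = 2 ^ k := by
      rw [abs_of_pos (by norm_num : (0:ℝ) < 1 / 2), one_div, inv_inv]
    rw [h2]
    refine mul_le_mul_of_nonneg_right ?_ (by positivity)
    calc (2 * Real.pi)⁻¹ * ∫ θ in (0:ℝ)..2 * Real.pi, ‖g (circleMap s (1 / 2) θ)‖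
        ≤ (2 * Real.pi)⁻¹ * (2 * Real.pi * M) :=
          mul_le_mul_of_nonneg_left hint (by positivity)
      _ = M := by field_simp
  -- iterated derivative vs coefficient
  have hfact := hps.factorial_smul (y := (1 : ℂ)) k
  have h1 : ‖iteratedDeriv k g s‖ / (Nat.factorial k) = ‖p k fun _ => (1 : ℂ)‖ := by
    rw [iteratedDeriv_eq_iteratedFDeriv, ← hfact, nsmul_eq_mul, norm_mul, Complex.norm_natCast]
    rw [mul_comm, mul_div_assoc, div_self (by exact_mod_cast (Nat.factorial_pos k).ne'), mul_one]
  have h2 : ‖p k fun _ => (1 : ℂ)‖ ≤ ‖p k‖ := by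
    have := (p k).le_opNorm fun _ => (1 : ℂ)
    simpa using this
  calc ‖iteratedDeriv k g s‖ / (Nat.factorial k) ≤ M * 2 ^ k := by
        rw [h1]; exact h2.trans hcoef
    _ ≤ M * 2 ^ (k + 1) := by
        rw [pow_succ]
        nlinarith [pow_nonneg (show (0:ℝ) ≤ 2 by norm_num) k, hMpos.le]
    _ = C * m * 2 ^ (k + 1) * Real.Gamma (r + 1) ^ d / α ^ r := by rw [hM]; ring
end

section
/- There is a constant C > 0 such that for every real σ ≥ 2, ∫_{−∞}^{∞} |Γ(σ + 2 + it)| dt ≤ C σ^3 Γ(σ). -/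
open Complex

open MeasureTheory

lemma my_abs_Gamma_le {s : ℂ} (hs : 0 < s.re) :
    ‖Complex.Gamma s‖ ≤ Real.Gamma s.re := by
  rw [Complex.Gamma_eq_integral hs, Real.Gamma_eq_integral hs, Complex.GammaIntegral]
  calc ‖∫ x in Set.Ioi (0:ℝ), ↑(Real.exp (-x)) * (x:ℂ) ^ (s - 1)‖
      ≤ ∫ x in Set.Ioi (0:ℝ), ‖↑(Real.exp (-x)) * (x:ℂ) ^ (s - 1)‖ := by
        simpa using
          norm_integral_le_integral_norm (fun x : ℝ => ↑(Real.exp (-x)) * (x:ℂ) ^ (s - 1))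
    _ = ∫ x in Set.Ioi (0:ℝ), Real.exp (-x) * x ^ (s.re - 1) := by
        apply setIntegral_congr_fun measurableSet_Ioi
        intro x hx
        show ‖↑(Real.exp (-x)) * (x:ℂ) ^ (s - 1)‖ = Real.exp (-x) * x ^ (s.re - 1)
        rw [norm_mul, Complex.norm_real, Real.norm_eq_abs, Complex.norm_cpow_eq_rpow_re_of_pos hx,
          abs_of_pos (Real.exp_pos _)]
        simp [Complex.sub_re]

/-- There is a constant `C > 0` such that for every `σ ≥ 2`,
`∫_{-∞}^{∞} |Γ(σ + 2 + it)| dt ≤ C σ³ Γ(σ)`. -/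
theorem gamma_vertical_integral_bound :
    ∃ C : ℝ, 0 < C ∧ ∀ σ : ℝ, 2 ≤ σ →
      (∫ t : ℝ, ‖Complex.Gamma ((σ : ℂ) + 2 + t * Complex.I)‖) ≤
        C * σ ^ 3 * Real.Gamma σ := by
  refine ⟨30, by norm_num, fun σ hσ => ?_⟩
  have hσ0 : (0:ℝ) < σ := by linarith
  have hΓpos : 0 < Real.Gamma σ := Real.Gamma_pos_of_pos hσ0
  set G := Real.Gamma (σ + 4) with hG
  have hGnn : 0 ≤ G := Real.Gamma_nonneg_of_nonneg (by linarith)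
  have ha : (0:ℝ) < σ + 2 := by linarith
  -- pointwise bound
  have key : ∀ t : ℝ, ‖Complex.Gamma ((σ:ℂ) + 2 + t * Complex.I)‖ ≤
      2 * G * ((σ+2)^2 + t^2)⁻¹ := by
    intro t
    set s : ℂ := (σ:ℂ) + 2 + t * Complex.I with hsdef
    have hre : s.re = σ + 2 := by simp [hsdef]
    have him : s.im = t := by simp [hsdef]
    have hs0 : s ≠ 0 := by
      intro h; rw [h] at hre; simp at hre; linarith
    have hs1 : s + 1 ≠ 0 := by
      intro h
      have h2 : (s+1).re = 0 := by rw [h]; simp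
      rw [Complex.add_re, hre, Complex.one_re] at h2; linarith
    have hfe : Complex.Gamma (s + 2) = (s+1) * s * Complex.Gamma s := by
      rw [show s + 2 = (s+1)+1 by ring, Complex.Gamma_add_one _ hs1,
        Complex.Gamma_add_one _ hs0]; ring
    have habs : ‖s+1‖ * ‖s‖ * ‖Complex.Gamma s‖ =
        ‖Complex.Gamma (s+2)‖ := by rw [hfe]; simp
    have hb2 : ‖Complex.Gamma (s+2)‖ ≤ G := by
      have hre2 : (s+2).re = σ + 4 := by
        simp [Complex.add_re, hre]; ring
      have := my_abs_Gamma_le (s := s+2) (by rw [hre2]; linarith)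
      rwa [hre2] at this
    have h1 : σ + 2 ≤ ‖s‖ := by
      calc σ + 2 ≤ |s.re| := by rw [hre]; exact le_abs_self _
        _ ≤ ‖s‖ := Complex.abs_re_le_norm s
    have h2 : |t| ≤ ‖s‖ := by
      have := Complex.abs_im_le_norm s; rwa [him] at this
    have h3 : σ + 2 ≤ ‖s+1‖ := by
      calc σ + 2 ≤ |(s+1).re| := by
            rw [Complex.add_re, hre, Complex.one_re]
            calc σ + 2 ≤ σ + 2 + 1 := by linarith
              _ ≤ |σ + 2 + 1| := le_abs_self _
        _ ≤ ‖s+1‖ := Complex.abs_re_le_norm _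
    have h4 : |t| ≤ ‖s+1‖ := by
      have := Complex.abs_im_le_norm (s+1)
      rwa [Complex.add_im, him, Complex.one_im, add_zero] at this
    have hden : ((σ+2)^2 + t^2)/2 ≤ ‖s+1‖ * ‖s‖ := by
      nlinarith [abs_nonneg t, _root_.sq_abs t, mul_le_mul h3 h1 (by linarith) (by positivity),
        mul_le_mul h4 h2 (abs_nonneg t) (by positivity)]
    have hXpos : (0:ℝ) < (σ+2)^2 + t^2 := by positivity
    have hdenpos : 0 < ‖s+1‖ * ‖s‖ := lt_of_lt_of_le (by linarith) hden
    have hΓs : ‖Complex.Gamma s‖ =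
        ‖Complex.Gamma (s+2)‖ / (‖s+1‖ * ‖s‖) := by
      field_simp [hdenpos.ne']
      linarith [habs]
    rw [hΓs]
    calc ‖Complex.Gamma (s+2)‖ / (‖s+1‖ * ‖s‖)
        ≤ G / (((σ+2)^2 + t^2)/2) :=
          div_le_div₀ hGnn hb2 (by linarith) hden
      _ = 2 * G * ((σ+2)^2 + t^2)⁻¹ := by
          rw [div_div_eq_mul_div, div_eq_mul_inv]; ring
  -- integrability of the majorant
  have hint0 : Integrable (fun t : ℝ => (1 + (t/(σ+2))^2)⁻¹) :=
    integrable_inv_one_add_sq.comp_div ha.ne'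
  have heq : (fun t : ℝ => ((σ+2)^2 + t^2)⁻¹) =
      fun t : ℝ => ((σ+2)^2)⁻¹ * (1 + (t/(σ+2))^2)⁻¹ := by
    funext t
    rw [← mul_inv]
    congr 1
    field_simp
  have hint : Integrable (fun t : ℝ => 2 * G * ((σ+2)^2 + t^2)⁻¹) := by
    rw [show (fun t : ℝ => 2 * G * ((σ+2)^2 + t^2)⁻¹) =
      fun t : ℝ => (2 * G * ((σ+2)^2)⁻¹) * (1 + (t/(σ+2))^2)⁻¹ by
        funext t
        have h := congrFun heq t
        rw [h]; ring]
    exact hint0.const_mul _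
  -- value of the majorant integral
  have hval : (∫ t : ℝ, 2 * G * ((σ+2)^2 + t^2)⁻¹) = 2 * G * (Real.pi / (σ+2)) := by
    rw [MeasureTheory.integral_const_mul]
    congr 1
    rw [heq, MeasureTheory.integral_const_mul,
      MeasureTheory.Measure.integral_comp_div (fun x : ℝ => (1 + x^2)⁻¹) (σ+2),
      integral_univ_inv_one_add_sq, smul_eq_mul, abs_of_pos ha]
    field_simp
  calc (∫ t : ℝ, ‖Complex.Gamma ((σ:ℂ) + 2 + t * Complex.I)‖)
      ≤ ∫ t : ℝ, 2 * G * ((σ+2)^2 + t^2)⁻¹ :=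
        integral_mono_of_nonneg (Filter.Eventually.of_forall fun t => by positivity)
          hint (Filter.Eventually.of_forall key)
    _ = 2 * G * (Real.pi / (σ+2)) := hval
    _ ≤ 30 * σ ^ 3 * Real.Gamma σ := by
        have hexp : G = (σ+3)*((σ+2)*((σ+1)*(σ*Real.Gamma σ))) := by
          rw [hG, show σ+4 = (σ+3)+1 by ring, Real.Gamma_add_one (by linarith),
            show σ+3 = (σ+2)+1 by ring, Real.Gamma_add_one (by linarith),
            show σ+2 = (σ+1)+1 by ring, Real.Gamma_add_one (by linarith),
            Real.Gamma_add_one hσ0.ne']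
        rw [hexp, div_eq_mul_inv, mul_comm Real.pi]
        rw [show (2 * ((σ+3)*((σ+2)*((σ+1)*(σ*Real.Gamma σ)))) * ((σ+2)⁻¹ * Real.pi))
            = (2 * Real.pi * (σ+3)*(σ+1)*σ*Real.Gamma σ) * ((σ+2) * (σ+2)⁻¹) by ring,
          mul_inv_cancel₀ ha.ne', mul_one]
        have hpoly : 2*Real.pi*(σ+3)*(σ+1)*σ ≤ 30*σ^3 := by
          nlinarith [mul_le_mul_of_nonneg_right Real.pi_le_four
              (show (0:ℝ) ≤ (σ+3)*(σ+1)*σ by positivity),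
            mul_nonneg (mul_nonneg hσ0.le (show (0:ℝ) ≤ 11*σ+6 by linarith))
              (show (0:ℝ) ≤ σ-2 by linarith)]
        exact mul_le_mul_of_nonneg_right hpoly hΓpos.le
end

section
/- (Carlson) Let f : ℂ → ℂ be entire, and suppose there are constants B, k > 0 with |f(z)| ≤ B e^{k|z|} for all z ∈ ℂ, and constants M > 0, a > 0 with |f(x)| ≤ M e^{−a|x|} for all real x. Then f(z) = 0 for all z ∈ ℂ. -/
open MeasureTheory Set Complex Filter
open scoped FourierTransform Topology

lemma carlson_integrable_exp_neg_abs {b : ℝ} (hb : 0 < b) :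
    Integrable (fun x : ℝ => Real.exp (-b * |x|)) := by
  have h1 : IntegrableOn (fun x : ℝ => Real.exp (-b * |x|)) (Ici 0) := by
    rw [integrableOn_Ici_iff_integrableOn_Ioi]
    refine (exp_neg_integrableOn_Ioi 0 hb).congr_fun (fun x hx => ?_) measurableSet_Ioi
    rw [abs_of_pos hx]
  have h2 : IntegrableOn (fun x : ℝ => Real.exp (-b * |x|)) (Iic 0) := by
    have h3 : Integrable ((Ici (0:ℝ)).indicator fun x : ℝ => Real.exp (-b * |x|)) := by
      rwa [integrable_indicator_iff measurableSet_Ici]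
    have h4 := h3.comp_neg
    have h5 : (fun x : ℝ => ((Ici (0:ℝ)).indicator fun x : ℝ => Real.exp (-b * |x|)) (-x))
        = (Iic (0:ℝ)).indicator fun x : ℝ => Real.exp (-b * |x|) := by
      funext x
      simp only [Set.indicator, mem_Ici, mem_Iic, abs_neg]
      rcases le_or_gt x 0 with h | h
      · simp [h, neg_nonneg.2 h]
      · simp [not_le.2 h, not_le.2 (neg_neg_iff_pos.mpr h)]
    rw [h5] at h4
    rwa [← integrable_indicator_iff measurableSet_Iic]
  have := h2.union h1
  rwa [Iic_union_Ici, integrableOn_univ] at this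

lemma carlson_integrable_of_exp_decay {g : ℝ → ℂ} (hg : Continuous g) {K b : ℝ} (hb : 0 < b)
    (h : ∀ x, ‖g x‖ ≤ K * Real.exp (-b * |x|)) : Integrable g := by
  refine ((carlson_integrable_exp_neg_abs hb).const_mul K).mono' hg.aestronglyMeasurable ?_
  exact Eventually.of_forall h

lemma carlson_quadrant_bound (f : ℂ → ℂ) (hf : Differentiable ℂ f)
    (B k M a : ℝ) (hB : 0 < B) (hk : 0 < k) (hM : 0 < M) (ha : 0 < a)
    (hgrowth : ∀ z : ℂ, ‖f z‖ ≤ B * Real.exp (k * ‖z‖))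
    (hdecay : ∀ x : ℝ, ‖f x‖ ≤ M * Real.exp (-a * |x|)) :
    ∀ z : ℂ, ‖f z‖ ≤ (max B M) * Real.exp (-(a * |z.re|) + (k + a) * |z.im|) := by
  set cc : ℝ := k + a with hcc
  set C0 : ℝ := max B M with hC0
  have hC0B : B ≤ C0 := le_max_left _ _
  have hC0M : M ≤ C0 := le_max_right _ _
  have hkcc : k ≤ cc := by simp [hcc, ha.le]
  have hker : ∀ w z : ℂ, ‖f z * Complex.exp (w * z)‖ = ‖f z‖ * Real.exp ((w * z).re) := by
    intro w z
    rw [norm_mul, Complex.norm_exp]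
  have hd : ∀ (w : ℂ) (S : Set ℂ), DiffContOnCl ℂ (fun z => f z * Complex.exp (w * z)) S := by
    intro w S
    exact (hf.mul ((differentiable_id.const_mul w).cexp)).diffContOnCl
  have hO : ∀ (w : ℂ) (l : Filter ℂ), ∃ e < (2 : ℝ), ∃ D,
      (fun z => f z * Complex.exp (w * z)) =O[l]
        fun z => Real.exp (D * ‖z‖ ^ e) := by
    intro w l
    refine ⟨1, one_lt_two, k + ‖w‖,
      Asymptotics.IsBigO.of_bound B (Eventually.of_forall fun z => ?_)⟩
    rw [Real.rpow_one, Real.norm_eq_abs, abs_of_pos (Real.exp_pos _)]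
    rw [hker]
    have h1 : (w * z).re ≤ ‖w‖ * ‖z‖ := by
      refine (Complex.re_le_norm _).trans ?_
      rw [norm_mul]
    calc ‖f z‖ * Real.exp ((w * z).re)
        ≤ (B * Real.exp (k * ‖z‖)) * Real.exp (‖w‖ * ‖z‖) := by
          exact mul_le_mul (hgrowth z) (Real.exp_le_exp.2 h1) (Real.exp_pos _).le
            (by positivity)
      _ = B * Real.exp ((k + ‖w‖) * ‖z‖) := by
          rw [mul_assoc, ← Real.exp_add]; ring_nf
  -- boundary bound on the real axis, positive side (w.re = a)
  have hre_pos : ∀ (w : ℂ), w.re = a → ∀ x : ℝ, 0 ≤ x →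
      ‖f x * Complex.exp (w * x)‖ ≤ C0 := by
    intro w hw x hx
    rw [hker]
    have h1 : (w * (x : ℂ)).re = a * x := by
      rw [Complex.mul_re, Complex.ofReal_re, Complex.ofReal_im, hw]; ring
    rw [h1]
    calc ‖f x‖ * Real.exp (a * x)
        ≤ (M * Real.exp (-a * |x|)) * Real.exp (a * x) :=
          mul_le_mul_of_nonneg_right (hdecay x) (Real.exp_pos _).le
      _ = M := by
          rw [_root_.abs_of_nonneg hx, mul_assoc, ← Real.exp_add]
          have h3 : -a * x + a * x = 0 := by ring
          rw [h3, Real.exp_zero, mul_one]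
      _ ≤ C0 := hC0M
  have hre_neg : ∀ (w : ℂ), w.re = -a → ∀ x : ℝ, x ≤ 0 →
      ‖f x * Complex.exp (w * x)‖ ≤ C0 := by
    intro w hw x hx
    rw [hker]
    have h1 : (w * (x : ℂ)).re = -a * x := by
      rw [Complex.mul_re, Complex.ofReal_re, Complex.ofReal_im, hw]; ring
    rw [h1]
    calc ‖f x‖ * Real.exp (-a * x)
        ≤ (M * Real.exp (-a * |x|)) * Real.exp (-a * x) :=
          mul_le_mul_of_nonneg_right (hdecay x) (Real.exp_pos _).le
      _ = M := by
          rw [_root_.abs_of_nonpos hx, mul_assoc, ← Real.exp_add]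
          have h3 : -a * -x + -a * x = 0 := by ring
          rw [h3, Real.exp_zero, mul_one]
      _ ≤ C0 := hC0M
  -- boundary bound on the imaginary axis
  have him_pos : ∀ (w : ℂ), w.im = cc → ∀ x : ℝ, 0 ≤ x →
      ‖f (x * I) * Complex.exp (w * (x * I))‖ ≤ C0 := by
    intro w hw x hx
    rw [hker]
    have h1 : (w * ((x : ℂ) * I)).re = -cc * x := by
      rw [Complex.mul_re, hw]
      simp
    have h2 : ‖(x : ℂ) * I‖ = x := by
      rw [norm_mul, Complex.norm_I, mul_one, Complex.norm_real, Real.norm_eq_abs, _root_.abs_of_nonneg hx]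
    rw [h1]
    calc ‖f (x * I)‖ * Real.exp (-cc * x)
        ≤ (B * Real.exp (k * x)) * Real.exp (-cc * x) := by
          refine mul_le_mul_of_nonneg_right ?_ (Real.exp_pos _).le
          have := hgrowth ((x : ℂ) * I)
          rwa [h2] at this
      _ = B * Real.exp ((k - cc) * x) := by rw [mul_assoc, ← Real.exp_add]; ring_nf
      _ ≤ B * 1 := by
          refine mul_le_mul_of_nonneg_left ?_ hB.le
          rw [Real.exp_le_one_iff]
          have : k - cc ≤ 0 := by linarith
          exact mul_nonpos_of_nonpos_of_nonneg this hx
      _ ≤ C0 := by simpa using hC0B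
  have him_neg : ∀ (w : ℂ), w.im = -cc → ∀ x : ℝ, x ≤ 0 →
      ‖f (x * I) * Complex.exp (w * (x * I))‖ ≤ C0 := by
    intro w hw x hx
    rw [hker]
    have h1 : (w * ((x : ℂ) * I)).re = cc * x := by
      rw [Complex.mul_re, hw]
      simp
    have h2 : ‖(x : ℂ) * I‖ = -x := by
      rw [norm_mul, Complex.norm_I, mul_one, Complex.norm_real, Real.norm_eq_abs, _root_.abs_of_nonpos hx]
    rw [h1]
    calc ‖f (x * I)‖ * Real.exp (cc * x)
        ≤ (B * Real.exp (k * -x)) * Real.exp (cc * x) := by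
          refine mul_le_mul_of_nonneg_right ?_ (Real.exp_pos _).le
          have := hgrowth ((x : ℂ) * I)
          rwa [h2] at this
      _ = B * Real.exp ((cc - k) * x) := by rw [mul_assoc, ← Real.exp_add]; ring_nf
      _ ≤ B * 1 := by
          refine mul_le_mul_of_nonneg_left ?_ hB.le
          rw [Real.exp_le_one_iff]
          have : 0 ≤ cc - k := by linarith
          exact mul_nonpos_of_nonneg_of_nonpos this hx
      _ ≤ C0 := by simpa using hC0B
  -- from the product bound to the final bound
  have hfinal : ∀ (w z : ℂ), ‖f z * Complex.exp (w * z)‖ ≤ C0 →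
      ‖f z‖ ≤ C0 * Real.exp (-(w.re * z.re - w.im * z.im)) := by
    intro w z h
    rw [hker] at h
    have h2 : (w * z).re = w.re * z.re - w.im * z.im := Complex.mul_re w z
    calc ‖f z‖ = ‖f z‖ * Real.exp ((w * z).re) * Real.exp (-(w.re * z.re - w.im * z.im)) := by
          rw [h2, mul_assoc, ← Real.exp_add]; simp
      _ ≤ C0 * Real.exp (-(w.re * z.re - w.im * z.im)) :=
          mul_le_mul_of_nonneg_right h (Real.exp_pos _).le
  intro z
  rcases le_or_gt 0 z.re with hx | hx <;> rcases le_or_gt 0 z.im with hy | hy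
  · -- Quadrant I : w = a + cc I
    set w : ℂ := (a : ℂ) + (cc : ℂ) * I with hwdef
    have hwre : w.re = a := by simp [hwdef]
    have hwim : w.im = cc := by simp [hwdef]
    have key := PhragmenLindelof.quadrant_I (hd w _) (hO w _)
      (hre_pos w hwre) (him_pos w hwim) hx hy
    have hfin := hfinal w z key
    rw [hwre, hwim] at hfin
    rw [_root_.abs_of_nonneg hx, _root_.abs_of_nonneg hy]
    convert hfin using 2
    ring
  · -- Quadrant IV : w = a - cc I
    set w : ℂ := (a : ℂ) - (cc : ℂ) * I with hwdef
    have hwre : w.re = a := by simp [hwdef]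
    have hwim : w.im = -cc := by simp [hwdef]
    have key := PhragmenLindelof.quadrant_IV (hd w _) (hO w _)
      (hre_pos w hwre) (him_neg w hwim) hx hy.le
    have hfin := hfinal w z key
    rw [hwre, hwim] at hfin
    rw [_root_.abs_of_nonneg hx, _root_.abs_of_neg hy]
    convert hfin using 2
    ring
  · -- Quadrant II : w = -a + cc I
    set w : ℂ := -(a : ℂ) + (cc : ℂ) * I with hwdef
    have hwre : w.re = -a := by simp [hwdef]
    have hwim : w.im = cc := by simp [hwdef]
    have key := PhragmenLindelof.quadrant_II (hd w _) (hO w _)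
      (hre_neg w hwre) (him_pos w hwim) hx.le hy
    have hfin := hfinal w z key
    rw [hwre, hwim] at hfin
    rw [_root_.abs_of_neg hx, _root_.abs_of_nonneg hy]
    convert hfin using 2
    ring
  · -- Quadrant III : w = -a - cc I
    set w : ℂ := -(a : ℂ) - (cc : ℂ) * I with hwdef
    have hwre : w.re = -a := by simp [hwdef]
    have hwim : w.im = -cc := by simp [hwdef]
    have key := PhragmenLindelof.quadrant_III (hd w _) (hO w _)
      (hre_neg w hwre) (him_neg w hwim) hx.le hy.le
    have hfin := hfinal w z key
    rw [hwre, hwim] at hfin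
    rw [_root_.abs_of_neg hx, _root_.abs_of_neg hy]
    convert hfin using 2
    ring

set_option maxHeartbeats 1000000 in
/-- **Carlson's theorem** (as used by Beurling): an entire function of exponential type
that decays exponentially on the real axis vanishes identically. -/
theorem carlson_exponential_decay (f : ℂ → ℂ) (hf : Differentiable ℂ f)
    (B k : ℝ) (hB : 0 < B) (hk : 0 < k)
    (hgrowth : ∀ z : ℂ, ‖f z‖ ≤ B * Real.exp (k * ‖z‖))
    (M a : ℝ) (hM : 0 < M) (ha : 0 < a)
    (hdecay : ∀ x : ℝ, ‖f x‖ ≤ M * Real.exp (-a * |x|)) :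
    ∀ z : ℂ, f z = 0 := by
  have hbound := carlson_quadrant_bound f hf B k M a hB hk hM ha hgrowth hdecay
  set cc : ℝ := k + a with hccdef
  set C0 : ℝ := max B M with hC0def
  have hC0 : 0 < C0 := lt_of_lt_of_le hB (le_max_left _ _)
  have hcc : 0 < cc := by positivity
  -- norm of the exponential kernel
  have hnorm : ∀ (ζ z : ℂ), ‖Complex.exp (-(ζ * z * I))‖
      = Real.exp (ζ.re * z.im + ζ.im * z.re) := by
    intro ζ z
    rw [Complex.norm_exp]
    congr 1
    simp only [Complex.neg_re, Complex.mul_re, Complex.mul_im, Complex.I_re, Complex.I_im]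
    ring
  have hre_add : ∀ x t : ℝ, ((x : ℂ) + (t : ℂ) * I).re = x := by intro x t; simp
  have him_add : ∀ x t : ℝ, ((x : ℂ) + (t : ℂ) * I).im = t := by intro x t; simp
  -- pointwise bound for the shifted kernel, real frequency ξ
  have hgb : ∀ (ξ : ℝ) (x t : ℝ),
      ‖Complex.exp (-((ξ : ℂ) * ((x : ℂ) + (t : ℂ) * I) * I)) * f ((x : ℂ) + (t : ℂ) * I)‖
        ≤ (C0 * Real.exp (ξ * t + cc * |t|)) * Real.exp (-a * |x|) := by
    intro ξ x t
    rw [norm_mul, hnorm]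
    simp only [Complex.ofReal_re, Complex.ofReal_im, hre_add, him_add, zero_mul, add_zero]
    calc Real.exp (ξ * t) * ‖f ((x : ℂ) + (t : ℂ) * I)‖
        ≤ Real.exp (ξ * t) * (C0 * Real.exp (-(a * |x|) + cc * |t|)) := by
          refine mul_le_mul_of_nonneg_left ?_ (Real.exp_pos _).le
          have := hbound ((x : ℂ) + (t : ℂ) * I)
          rwa [hre_add, him_add] at this
      _ = (C0 * Real.exp (ξ * t + cc * |t|)) * Real.exp (-a * |x|) := by
          rw [mul_comm (Real.exp (ξ * t)), mul_assoc, mul_assoc, ← Real.exp_add, ← Real.exp_add]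
          ring_nf
  have hgb' : ∀ (ξ : ℝ) (x t : ℝ),
      ‖Complex.exp (-((ξ : ℂ) * ((x : ℂ) + (t : ℂ) * I) * I)) * f ((x : ℂ) + (t : ℂ) * I)‖
        ≤ (C0 * Real.exp ((|ξ| + cc) * |t|)) * Real.exp (-a * |x|) := by
    intro ξ x t
    refine (hgb ξ x t).trans (mul_le_mul_of_nonneg_right ?_ (Real.exp_pos _).le)
    refine mul_le_mul_of_nonneg_left (Real.exp_le_exp.2 ?_) hC0.le
    have h1 : ξ * t ≤ |ξ| * |t| := by
      calc ξ * t ≤ |ξ * t| := le_abs_self _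
        _ = |ξ| * |t| := abs_mul _ _
    nlinarith [abs_nonneg t]
  -- integrability on horizontal lines
  have hline : ∀ (ξ : ℝ) (t : ℝ), Integrable
      (fun x : ℝ => Complex.exp (-((ξ : ℂ) * ((x : ℂ) + (t : ℂ) * I) * I))
        * f ((x : ℂ) + (t : ℂ) * I)) := by
    intro ξ t
    refine carlson_integrable_of_exp_decay ?_ ha (fun x => hgb' ξ x t)
    have h1 : Continuous fun x : ℝ => (x : ℂ) + (t : ℂ) * I :=
      Complex.continuous_ofReal.add continuous_const
    exact ((((continuous_const.mul h1)).mul continuous_const).neg.cexp).mul (hf.continuous.comp h1)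
  -- contour shift
  have hshift : ∀ (ξ : ℝ) (y : ℝ),
      (∫ x : ℝ, Complex.exp (-((ξ : ℂ) * ((x : ℂ) + (y : ℂ) * I) * I))
          * f ((x : ℂ) + (y : ℂ) * I))
        = ∫ x : ℝ, Complex.exp (-((ξ : ℂ) * (x : ℂ) * I)) * f x := by
    intro ξ y
    set g : ℂ → ℂ := fun z => Complex.exp (-((ξ : ℂ) * z * I)) * f z with hgdef
    have hgdiff : Differentiable ℂ g :=
      (((differentiable_id.const_mul ((ξ:ℂ))).mul_const I).neg.cexp).mul hf
    have hrect : ∀ R : ℝ,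
        (((∫ x in (-R)..R, g x) - ∫ x in (-R)..R, g ((x : ℂ) + (y : ℂ) * I))
          + I • ∫ t in (0:ℝ)..y, g ((R : ℂ) + (t : ℂ) * I))
          - I • ∫ t in (0:ℝ)..y, g (-(R : ℂ) + (t : ℂ) * I) = 0 := by
      intro R
      have h := Complex.integral_boundary_rect_eq_zero_of_differentiableOn g
        (((-R : ℝ) : ℂ)) ((R : ℂ) + (y : ℂ) * I) hgdiff.differentiableOn
      simp only [Complex.add_re, Complex.add_im, Complex.ofReal_re, Complex.ofReal_im,
        Complex.mul_I_re, Complex.mul_I_im, Complex.ofReal_neg, Complex.neg_re, Complex.neg_im,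
        neg_zero, zero_add, add_zero, Complex.ofReal_zero, zero_mul, neg_neg] at h
      exact h
    have hint0 : Integrable (fun x : ℝ => g x) := by
      have h := hline ξ 0
      simp only [hgdef]
      simpa using h
    have hinty : Integrable (fun x : ℝ => g ((x : ℂ) + (y : ℂ) * I)) := by
      simp only [hgdef]
      exact hline ξ y
    have hT0 : Tendsto (fun R : ℝ => ∫ x in (-R)..R, g x) atTop
        (𝓝 (∫ x : ℝ, g x)) :=
      intervalIntegral_tendsto_integral hint0 tendsto_neg_atTop_atBot tendsto_id
    have hTy : Tendsto (fun R : ℝ => ∫ x in (-R)..R, g ((x : ℂ) + (y : ℂ) * I)) atTop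
        (𝓝 (∫ x : ℝ, g ((x : ℂ) + (y : ℂ) * I))) :=
      intervalIntegral_tendsto_integral hinty tendsto_neg_atTop_atBot tendsto_id
    -- bound |t| for t in the vertical segment
    have habs_t : ∀ t ∈ Set.uIoc (0:ℝ) y, |t| ≤ |y| := by
      intro t ht
      rcases Set.mem_uIoc.1 ht with h | h
      · rw [_root_.abs_of_pos h.1, _root_.abs_of_nonneg (h.1.le.trans h.2)]; exact h.2
      · rw [_root_.abs_of_nonpos h.2, _root_.abs_of_neg (h.1.trans_le h.2)]; exact neg_le_neg h.1.le
    set K1 : ℝ := C0 * Real.exp ((|ξ| + cc) * |y|) with hK1def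
    have hK1 : 0 < K1 := by positivity
    have hvbound : ∀ (R σ : ℝ), 0 ≤ R → |σ| = R →
        ‖∫ t in (0:ℝ)..y, g ((σ : ℂ) + (t : ℂ) * I)‖ ≤ (K1 * Real.exp (-a * R)) * |y - 0| := by
      intro R σ hR hσ
      refine intervalIntegral.norm_integral_le_of_norm_le_const fun t ht => ?_
      simp only [hgdef]
      calc ‖Complex.exp (-((ξ : ℂ) * ((σ : ℂ) + (t : ℂ) * I) * I)) * f ((σ : ℂ) + (t : ℂ) * I)‖
          ≤ (C0 * Real.exp ((|ξ| + cc) * |t|)) * Real.exp (-a * |σ|) := hgb' ξ σ t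
        _ ≤ K1 * Real.exp (-a * R) := by
            rw [hσ, hK1def]
            refine mul_le_mul_of_nonneg_right ?_ (Real.exp_pos _).le
            refine mul_le_mul_of_nonneg_left (Real.exp_le_exp.2 ?_) hC0.le
            have h2 : 0 ≤ |ξ| + cc := by positivity
            exact mul_le_mul_of_nonneg_left (habs_t t ht) h2
    have hVlim : Tendsto (fun R : ℝ => (K1 * Real.exp (-a * R)) * |y - 0|) atTop (𝓝 0) := by
      have h1 : Tendsto (fun R : ℝ => -a * R) atTop atBot := by
        have h0 := tendsto_neg_atTop_atBot.comp (Tendsto.const_mul_atTop ha tendsto_id)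
        simpa [Function.comp_def, neg_mul] using h0
      have h2 := (Real.tendsto_exp_atBot.comp h1).const_mul K1
      have h3 := h2.mul_const |y - 0|
      simpa [Function.comp_def] using h3
    have hV1 : Tendsto (fun R : ℝ => I • ∫ t in (0:ℝ)..y, g ((R : ℂ) + (t : ℂ) * I)) atTop
        (𝓝 0) := by
      have h4 : Tendsto (fun R : ℝ => ∫ t in (0:ℝ)..y, g ((R : ℂ) + (t : ℂ) * I)) atTop
          (𝓝 0) := by
        refine squeeze_zero_norm' ?_ hVlim
        filter_upwards [eventually_ge_atTop (0:ℝ)] with R hR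
        exact hvbound R R hR (_root_.abs_of_nonneg hR)
      simpa using h4.const_smul I
    have hV2 : Tendsto (fun R : ℝ => I • ∫ t in (0:ℝ)..y, g (-(R : ℂ) + (t : ℂ) * I)) atTop
        (𝓝 0) := by
      have h4 : Tendsto (fun R : ℝ => ∫ t in (0:ℝ)..y, g (-(R : ℂ) + (t : ℂ) * I)) atTop
          (𝓝 0) := by
        refine squeeze_zero_norm' ?_ hVlim
        filter_upwards [eventually_ge_atTop (0:ℝ)] with R hR
        have h5 : -(R : ℂ) = (((-R : ℝ)) : ℂ) := by push_cast; ring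
        rw [h5]
        exact hvbound R (-R) hR (by rw [abs_neg, _root_.abs_of_nonneg hR])
      simpa using h4.const_smul I
    have hcomb : Tendsto (fun R : ℝ =>
        (((∫ x in (-R)..R, g x) - ∫ x in (-R)..R, g ((x : ℂ) + (y : ℂ) * I))
          + I • ∫ t in (0:ℝ)..y, g ((R : ℂ) + (t : ℂ) * I))
          - I • ∫ t in (0:ℝ)..y, g (-(R : ℂ) + (t : ℂ) * I)) atTop
        (𝓝 (((∫ x : ℝ, g x) - (∫ x : ℝ, g ((x : ℂ) + (y : ℂ) * I))) + 0 - 0)) :=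
      (((hT0.sub hTy).add hV1).sub hV2)
    have hzero' : Tendsto (fun R : ℝ =>
        (((∫ x in (-R)..R, g x) - ∫ x in (-R)..R, g ((x : ℂ) + (y : ℂ) * I))
          + I • ∫ t in (0:ℝ)..y, g ((R : ℂ) + (t : ℂ) * I))
          - I • ∫ t in (0:ℝ)..y, g (-(R : ℂ) + (t : ℂ) * I)) atTop (𝓝 0) := by
      simp only [hrect]
      exact tendsto_const_nhds
    have heq := tendsto_nhds_unique hcomb hzero'
    have h9 : (∫ x : ℝ, g ((x : ℂ) + (y : ℂ) * I)) = ∫ x : ℝ, g x := by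
      simp only [add_zero, sub_zero] at heq
      exact (sub_eq_zero.1 heq).symm
    simp only [hgdef] at h9
    exact h9
  -- the transform vanishes for large frequencies
  have hzero : ∀ ξ : ℝ, cc < ξ →
      (∫ x : ℝ, Complex.exp (-((ξ : ℂ) * (x : ℂ) * I)) * f x) = 0 := by
    intro ξ hξ
    set A : ℝ := ∫ x : ℝ, Real.exp (-a * |x|) with hAdef
    have hA0 : 0 ≤ A := integral_nonneg fun x => (Real.exp_pos _).le
    have key : ∀ n : ℕ, ‖∫ x : ℝ, Complex.exp (-((ξ : ℂ) * (x : ℂ) * I)) * f x‖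
        ≤ (C0 * A) * Real.exp ((cc - ξ) * n) := by
      intro n
      rw [← hshift ξ (-(n : ℝ))]
      have hb1 : ∀ x : ℝ,
          ‖Complex.exp (-((ξ : ℂ) * ((x : ℂ) + ((-(n:ℝ) : ℝ) : ℂ) * I) * I))
              * f ((x : ℂ) + ((-(n:ℝ) : ℝ) : ℂ) * I)‖
            ≤ (C0 * Real.exp ((cc - ξ) * n)) * Real.exp (-a * |x|) := by
        intro x
        refine (hgb ξ x (-(n:ℝ))).trans ?_
        refine mul_le_mul_of_nonneg_right ?_ (Real.exp_pos _).le
        refine mul_le_mul_of_nonneg_left (Real.exp_le_exp.2 ?_) hC0.le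
        have h1 : |(-(n:ℝ))| = (n : ℝ) := by
          rw [abs_neg, Nat.abs_cast]
        rw [h1]
        ring_nf
        exact le_refl _
      calc ‖∫ x : ℝ, Complex.exp (-((ξ : ℂ) * ((x : ℂ) + ((-(n:ℝ) : ℝ) : ℂ) * I) * I))
              * f ((x : ℂ) + ((-(n:ℝ) : ℝ) : ℂ) * I)‖
          ≤ ∫ x : ℝ, (C0 * Real.exp ((cc - ξ) * n)) * Real.exp (-a * |x|) := by
            refine norm_integral_le_of_norm_le ?_ (Eventually.of_forall hb1)
            exact (carlson_integrable_exp_neg_abs ha).const_mul _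
        _ = (C0 * A) * Real.exp ((cc - ξ) * n) := by
            rw [integral_const_mul]
            ring
    have hlim : Tendsto (fun n : ℕ => (C0 * A) * Real.exp ((cc - ξ) * n)) atTop (𝓝 0) := by
      have h1 : Tendsto (fun n : ℕ => Real.exp ((cc - ξ) * n)) atTop (𝓝 0) := by
        have h2 : ∀ n : ℕ, Real.exp ((cc - ξ) * n) = Real.exp (cc - ξ) ^ n := by
          intro n
          rw [← Real.exp_nat_mul, mul_comm]
        simp only [h2]
        refine tendsto_pow_atTop_nhds_zero_of_lt_one (Real.exp_pos _).le ?_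
        rw [← Real.exp_zero]
        exact Real.exp_lt_exp.2 (by linarith)
      have h3 := h1.const_mul (C0 * A)
      simpa using h3
    have hle := ge_of_tendsto' hlim key
    exact norm_le_zero_iff.1 hle
  -- analyticity of the transform in the strip |Im ζ| < a
  have hΦderiv : ∀ ζ₀ : ℂ, |ζ₀.im| < a →
      HasDerivAt (fun ζ : ℂ => ∫ x : ℝ, Complex.exp (-(ζ * (x : ℂ) * I)) * f x)
        (∫ x : ℝ, Complex.exp (-(ζ₀ * (x : ℂ) * I)) * (-((x : ℂ) * I)) * f x) ζ₀ := by
    intro ζ₀ hζ₀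
    set ε : ℝ := (a - |ζ₀.im|) / 2 with hεdef
    have hε : 0 < ε := by
      rw [hεdef]
      linarith
    have hcontF : ∀ ζ : ℂ, Continuous fun x : ℝ => Complex.exp (-(ζ * (x : ℂ) * I)) * f x :=
      fun ζ => (((continuous_const.mul Complex.continuous_ofReal).mul
        continuous_const).neg.cexp).mul (hf.continuous.comp Complex.continuous_ofReal)
    have hcontF' : Continuous fun x : ℝ =>
        Complex.exp (-(ζ₀ * (x : ℂ) * I)) * (-((x : ℂ) * I)) * f x := by
      refine Continuous.mul (Continuous.mul ?_ ?_) (hf.continuous.comp Complex.continuous_ofReal)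
      · exact (((continuous_const.mul Complex.continuous_ofReal).mul
          continuous_const).neg.cexp)
      · exact (Complex.continuous_ofReal.mul continuous_const).neg
    have hker_norm : ∀ (ζ : ℂ) (x : ℝ), ‖Complex.exp (-(ζ * (x : ℂ) * I))‖
        = Real.exp (ζ.im * x) := by
      intro ζ x
      rw [hnorm]
      simp only [Complex.ofReal_re, Complex.ofReal_im, mul_zero, zero_add]
    have hFint : Integrable (fun x : ℝ => Complex.exp (-(ζ₀ * (x : ℂ) * I)) * f x) := by
      refine carlson_integrable_of_exp_decay (hcontF ζ₀) (K := M)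
        (show (0:ℝ) < a - |ζ₀.im| by linarith) (fun x => ?_)
      rw [norm_mul, hker_norm]
      calc Real.exp (ζ₀.im * x) * ‖f x‖
          ≤ Real.exp (|ζ₀.im| * |x|) * (M * Real.exp (-a * |x|)) := by
            refine mul_le_mul (Real.exp_le_exp.2 ?_) (hdecay x) (norm_nonneg _)
              (Real.exp_pos _).le
            calc ζ₀.im * x ≤ |ζ₀.im * x| := le_abs_self _
              _ = |ζ₀.im| * |x| := abs_mul _ _
        _ = M * Real.exp (-(a - |ζ₀.im|) * |x|) := by
            rw [mul_comm, mul_assoc, ← Real.exp_add]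
            ring_nf
    have hbnd : ∀ x : ℝ, ∀ ζ ∈ Metric.ball ζ₀ ε,
        ‖Complex.exp (-(ζ * (x : ℂ) * I)) * (-((x : ℂ) * I)) * f x‖
          ≤ (M * (2 / ε)) * Real.exp (-(ε / 2) * |x|) := by
      intro x ζ hζ
      have hζim : |ζ.im| ≤ |ζ₀.im| + ε := by
        have h1 : |ζ.im - ζ₀.im| ≤ ‖ζ - ζ₀‖ := by
          have := Complex.abs_im_le_norm (ζ - ζ₀)
          rwa [Complex.sub_im] at this
        have h2 : ‖ζ - ζ₀‖ < ε := by
          rw [← Complex.dist_eq]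
          exact Metric.mem_ball.1 hζ
        have h3 : |ζ.im| - |ζ₀.im| ≤ |ζ.im - ζ₀.im| := abs_sub_abs_le_abs_sub _ _
        linarith
      have hnormI : ‖-((x : ℂ) * I)‖ = |x| := by
        rw [norm_neg, norm_mul, Complex.norm_I,
          Complex.norm_real, Real.norm_eq_abs, mul_one]
      have hxle : |x| ≤ (2 / ε) * Real.exp ((ε / 2) * |x|) := by
        have h4 := Real.add_one_le_exp ((ε / 2) * |x|)
        have h5 : (ε / 2) * |x| ≤ Real.exp ((ε / 2) * |x|) := by linarith
        calc |x| = (2 / ε) * ((ε / 2) * |x|) := by field_simp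
          _ ≤ (2 / ε) * Real.exp ((ε / 2) * |x|) :=
            mul_le_mul_of_nonneg_left h5 (by positivity)
      rw [norm_mul, norm_mul, hker_norm, hnormI]
      have hu : |ζ₀.im| = a - 2 * ε := by rw [hεdef]; ring
      calc Real.exp (ζ.im * x) * |x| * ‖f x‖
          ≤ Real.exp ((|ζ₀.im| + ε) * |x|) * |x| * (M * Real.exp (-a * |x|)) := by
            refine mul_le_mul (mul_le_mul_of_nonneg_right (Real.exp_le_exp.2 ?_) (abs_nonneg _))
              (hdecay x) (norm_nonneg _) (by positivity)
            calc ζ.im * x ≤ |ζ.im * x| := le_abs_self _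
              _ = |ζ.im| * |x| := abs_mul _ _
              _ ≤ (|ζ₀.im| + ε) * |x| := mul_le_mul_of_nonneg_right hζim (abs_nonneg _)
        _ ≤ Real.exp ((|ζ₀.im| + ε) * |x|) * ((2 / ε) * Real.exp ((ε / 2) * |x|))
              * (M * Real.exp (-a * |x|)) := by
            refine mul_le_mul_of_nonneg_right (mul_le_mul_of_nonneg_left hxle
              (Real.exp_pos _).le) (by positivity)
        _ = (M * (2 / ε)) * Real.exp ((|ζ₀.im| + ε) * |x| + (ε / 2) * |x| + -a * |x|) := by
            rw [Real.exp_add, Real.exp_add]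
            ring
        _ = (M * (2 / ε)) * Real.exp (-(ε / 2) * |x|) := by
            congr 1
            congr 1
            rw [hu]
            ring
    have key := hasDerivAt_integral_of_dominated_loc_of_deriv_le (μ := volume)
      (F := fun (ζ : ℂ) (x : ℝ) => Complex.exp (-(ζ * (x : ℂ) * I)) * f x)
      (F' := fun (ζ : ℂ) (x : ℝ) => Complex.exp (-(ζ * (x : ℂ) * I)) * (-((x : ℂ) * I)) * f x)
      (x₀ := ζ₀) (bound := fun x => (M * (2 / ε)) * Real.exp (-(ε / 2) * |x|)) (Metric.ball_mem_nhds ζ₀ hε)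
      (Eventually.of_forall fun ζ => (hcontF ζ).aestronglyMeasurable) hFint
      hcontF'.aestronglyMeasurable (Eventually.of_forall hbnd)
      ((carlson_integrable_exp_neg_abs (by positivity : (0:ℝ) < ε / 2)).const_mul _)
      (Eventually.of_forall fun x ζ _ => ?_)
    · exact key.2
    · have h1 : HasDerivAt (fun ζ : ℂ => -(ζ * (x : ℂ) * I)) (-((x : ℂ) * I)) ζ := by
        have h2 := ((hasDerivAt_id ζ).mul_const ((x : ℂ) * I)).fun_neg
        simpa [mul_assoc] using h2
      exact (h1.cexp).mul_const (f x)
  -- identity theorem in the strip: the transform vanishes on all of ℝ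
  have hΦ0 : ∀ ξ : ℝ, (∫ x : ℝ, Complex.exp (-((ξ : ℂ) * (x : ℂ) * I)) * f x) = 0 := by
    have hSopen : IsOpen {ζ : ℂ | |ζ.im| < a} :=
      isOpen_lt (continuous_abs.comp Complex.continuous_im) continuous_const
    have hSconv : Convex ℝ {ζ : ℂ | |ζ.im| < a} := by
      have hseq : {ζ : ℂ | |ζ.im| < a} = {ζ : ℂ | -a < ζ.im} ∩ {ζ : ℂ | ζ.im < a} := by
        ext ζ
        simp [abs_lt]
      rw [hseq]
      exact (convex_halfSpace_im_gt _).inter (convex_halfSpace_im_lt _)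
    have hdOn : DifferentiableOn ℂ
        (fun ζ : ℂ => ∫ x : ℝ, Complex.exp (-(ζ * (x : ℂ) * I)) * f x) {ζ : ℂ | |ζ.im| < a} :=
      fun ζ hζ => ((hΦderiv ζ hζ).differentiableAt).differentiableWithinAt
    have han : AnalyticOnNhd ℂ
        (fun ζ : ℂ => ∫ x : ℝ, Complex.exp (-(ζ * (x : ℂ) * I)) * f x) {ζ : ℂ | |ζ.im| < a} :=
      hdOn.analyticOnNhd hSopen
    have hz₀S : ((cc + 1 : ℝ) : ℂ) ∈ {ζ : ℂ | |ζ.im| < a} := by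
      simp only [mem_setOf_eq, Complex.ofReal_im, abs_zero]
      exact ha
    have hfreq : ∃ᶠ ζ in 𝓝[≠] ((cc + 1 : ℝ) : ℂ),
        (fun ζ : ℂ => ∫ x : ℝ, Complex.exp (-(ζ * (x : ℂ) * I)) * f x) ζ = 0 := by
      have hu : Tendsto (fun n : ℕ => ((cc + 1 + 1 / (n + 1) : ℝ) : ℂ)) atTop
          (𝓝[≠] ((cc + 1 : ℝ) : ℂ)) := by
        rw [tendsto_nhdsWithin_iff]
        constructor
        · have h1 : Tendsto (fun n : ℕ => cc + 1 + 1 / ((n : ℝ) + 1)) atTop (𝓝 (cc + 1)) := by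
            have h2 := tendsto_const_nhds (x := cc + 1) (f := atTop (α := ℕ))
            have h3 := h2.add tendsto_one_div_add_atTop_nhds_zero_nat
            simpa using h3
          exact (Complex.continuous_ofReal.tendsto _).comp h1
        · refine Eventually.of_forall fun n => ?_
          simp only [mem_compl_iff, mem_singleton_iff]
          intro hcontra
          rw [Complex.ofReal_inj] at hcontra
          have h4 : (0:ℝ) < 1 / ((n : ℝ) + 1) := by positivity
          linarith
      refine hu.frequently (Frequently.of_forall fun n => ?_)
      refine hzero _ ?_
      have h4 : (0:ℝ) < 1 / ((n : ℝ) + 1) := by positivity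
      linarith
    intro ξ
    have hEq := han.eqOn_zero_of_preconnected_of_frequently_eq_zero hSconv.isPreconnected
      hz₀S hfreq
    have h5 := hEq (show ((ξ : ℝ) : ℂ) ∈ {ζ : ℂ | |ζ.im| < a} by
      simp only [mem_setOf_eq, Complex.ofReal_im, abs_zero]; exact ha)
    simpa using h5
  -- Fourier inversion : f vanishes on the real axis
  have hfrcont : Continuous fun x : ℝ => f x := hf.continuous.comp Complex.continuous_ofReal
  have hfrint : Integrable fun x : ℝ => f x :=
    carlson_integrable_of_exp_decay hfrcont ha hdecay
  have h𝓕 : (𝓕 fun x : ℝ => f x) = 0 := by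
    funext w
    rw [Real.fourier_real_eq_integral_exp_smul]
    have h3 : ∀ v : ℝ, Complex.exp (((-2 * Real.pi * v * w : ℝ) : ℂ) * I) • f v
        = Complex.exp (-(((2 * Real.pi * w : ℝ) : ℂ) * (v : ℂ) * I)) * f v := by
      intro v
      rw [smul_eq_mul]
      congr 2
      push_cast
      ring
    have h6 := integral_congr_ae (μ := volume) (Eventually.of_forall h3)
    rw [Pi.zero_apply]
    exact h6.trans (hΦ0 (2 * Real.pi * w))
  have h𝓕int : Integrable (𝓕 fun x : ℝ => f x) := by
    rw [h𝓕]
    exact integrable_zero _ _ _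
  have hinv := hfrcont.fourierInv_fourier_eq hfrint h𝓕int
  have hfr0 : ∀ x : ℝ, f x = 0 := by
    intro x
    have h4 : 𝓕⁻ (𝓕 fun x : ℝ => f x) x = f x := by rw [hinv]
    rw [h𝓕] at h4
    have h5 : (𝓕⁻ (0 : ℝ → ℂ)) x = 0 := by
      rw [Real.fourierInv_eq]
      simp
    rw [h5] at h4
    exact h4.symm
  -- identity theorem on ℂ
  have hfan : AnalyticOnNhd ℂ f univ := hf.differentiableOn.analyticOnNhd isOpen_univ
  have hfreq2 : ∃ᶠ z in 𝓝[≠] (0 : ℂ), f z = 0 := by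
    have hu : Tendsto (fun n : ℕ => ((1 / ((n : ℝ) + 1) : ℝ) : ℂ)) atTop (𝓝[≠] (0 : ℂ)) := by
      rw [tendsto_nhdsWithin_iff]
      constructor
      · have h2 := (Complex.continuous_ofReal.tendsto (0 : ℝ)).comp
          tendsto_one_div_add_atTop_nhds_zero_nat
        rw [Complex.ofReal_zero] at h2
        exact h2
      · refine Eventually.of_forall fun n => ?_
        simp only [mem_compl_iff, mem_singleton_iff]
        intro hcontra
        have h3 : (1 / ((n : ℝ) + 1)) = 0 := by exact_mod_cast Complex.ofReal_eq_zero.1 hcontra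
        have h4 : (0:ℝ) < 1 / ((n : ℝ) + 1) := by positivity
        linarith
    exact hu.frequently (Frequently.of_forall fun n => hfr0 _)
  have hEq2 := hfan.eqOn_zero_of_preconnected_of_frequently_eq_zero isPreconnected_univ
    (mem_univ 0) hfreq2
  intro z
  simpa using hEq2 (mem_univ z)
end

section
/- For every complex number s with 0 < Re(s) < 2, ∫_0^∞ log(1 + x^2) · x^{−1−s} dx = π/(s · sin(πs/2)). -/
open Complex Real
open MeasureTheory Set Filter Topology



lemma integral_cpow_div_one_add_Ioi {c : ℂ} (hc0 : 0 < c.re) (hc1 : c.re < 1) :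
    ∫ u in Ioi (0:ℝ), (u:ℂ) ^ (c - 1) / (1 + (u:ℂ)) = ↑π / Complex.sin (π * c) := by
  set g : ℝ → ℂ := fun u => (u:ℂ) ^ (c - 1) / (1 + (u:ℂ)) with hg
  set f : ℝ → ℝ := fun t => t / (1 - t) with hf
  have himg : f '' Ioo 0 1 = Ioi (0:ℝ) := by
    ext y; constructor
    · rintro ⟨t, ⟨ht0, ht1⟩, rfl⟩
      exact div_pos ht0 (by linarith)
    · intro hy
      have hy' := mem_Ioi.mp hy
      have h1y : (0:ℝ) < 1 + y := by linarith
      refine ⟨y / (1 + y), ⟨div_pos hy' h1y, ?_⟩, ?_⟩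
      · rw [div_lt_one h1y]; linarith
      · have : 1 - y / (1 + y) = 1 / (1 + y) := by field_simp; ring
        simp only [hf, this]
        field_simp
  have hderiv : ∀ t ∈ Ioo (0:ℝ) 1, HasDerivWithinAt f (((1 - t)⁻¹) ^ 2) (Ioo 0 1) t := by
    intro t ht
    have h1t : (1:ℝ) - t ≠ 0 := by have := ht.2; intro h; rw [sub_eq_zero] at h; linarith
    have : HasDerivAt f ((1 * (1 - t) - t * (0 - 1)) / (1 - t) ^ 2) t :=
      (hasDerivAt_id t).div ((hasDerivAt_const t 1).sub (hasDerivAt_id t)) h1t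
    refine this.hasDerivWithinAt.congr_deriv ?_
    rw [div_eq_iff (pow_ne_zero 2 h1t), inv_pow, inv_mul_cancel₀ (pow_ne_zero 2 h1t)]; ring
  have hinj : InjOn f (Ioo 0 1) := by
    rintro a ⟨ha0, ha1⟩ b ⟨hb0, hb1⟩ h
    simp only [hf] at h
    rw [div_eq_div_iff (by linarith) (by linarith)] at h
    nlinarith
  rw [← himg, integral_image_eq_integral_abs_deriv_smul measurableSet_Ioo hderiv hinj]
  have key : ∀ t ∈ Ioo (0:ℝ) 1,
      |((1 - t)⁻¹) ^ 2| • g (f t) = (t:ℂ) ^ (c - 1) * ((1:ℂ) - (t:ℂ)) ^ ((1 - c) - 1) := by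
    intro t ht
    obtain ⟨ht0, ht1⟩ := ht
    have h1t : (0:ℝ) < 1 - t := by linarith
    have habs : |((1 - t)⁻¹) ^ 2| = ((1 - t)⁻¹) ^ 2 := abs_of_nonneg (by positivity)
    have hft : f t = t * (1 - t)⁻¹ := by rw [hf]; ring
    have hcoe : ((1:ℂ) - (t:ℂ)) = (((1 - t : ℝ)):ℂ) := by push_cast; ring
    have hne : ((1:ℂ) - (t:ℂ)) ≠ 0 := by
      rw [hcoe]; exact_mod_cast h1t.ne'
    have harg : ((1:ℂ) - (t:ℂ)).arg ≠ π := by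
      rw [hcoe, arg_ofReal_of_nonneg h1t.le]
      exact Real.pi_ne_zero.symm
    have hCne : ((1:ℂ) - (t:ℂ)) ^ (c - 1) ≠ 0 := by
      simp [Complex.cpow_eq_zero_iff, hne]
    have hpow : ((f t : ℝ):ℂ) ^ (c - 1)
        = (t:ℂ) ^ (c - 1) * (((1:ℂ) - (t:ℂ)) ^ (c - 1))⁻¹ := by
      rw [hft, ofReal_mul, mul_cpow_ofReal_nonneg ht0.le (inv_nonneg.mpr h1t.le)]
      congr 1
      rw [ofReal_inv, ← hcoe, inv_cpow _ _ harg]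
    have hden : (1:ℂ) + ((f t : ℝ):ℂ) = (((1:ℂ) - (t:ℂ)))⁻¹ := by
      rw [hft]
      push_cast
      field_simp
      ring
    have hrhs : ((1:ℂ) - (t:ℂ)) ^ ((1 - c) - 1)
        = (((1:ℂ) - (t:ℂ)) ^ (c - 1))⁻¹ / ((1:ℂ) - (t:ℂ)) := by
      have : (1 - c) - 1 = -(c - 1) - 1 := by ring
      rw [this, cpow_sub _ _ hne, cpow_neg, cpow_one]
    simp only [hg, real_smul, habs, hpow, hden, hrhs]
    push_cast
    field_simp
  rw [setIntegral_congr_fun measurableSet_Ioo key]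
  have hbeta : ∫ t in Ioo (0:ℝ) 1, (t:ℂ) ^ (c - 1) * ((1:ℂ) - (t:ℂ)) ^ ((1 - c) - 1)
      = Complex.betaIntegral c (1 - c) := by
    rw [Complex.betaIntegral, intervalIntegral.integral_of_le zero_le_one,
      MeasureTheory.integral_Ioc_eq_integral_Ioo]
  rw [hbeta]
  have h1c : 0 < (1 - c).re := by simp [Complex.sub_re]; linarith
  have := Complex.Gamma_mul_Gamma_eq_betaIntegral hc0 h1c
  rw [add_sub_cancel, Complex.Gamma_one, one_mul] at this
  rw [← this, Complex.Gamma_mul_Gamma_one_sub]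

lemma integral_cpow_div_one_add_sq_Ioi {s : ℂ} (h0 : 0 < s.re) (h2 : s.re < 2) :
    ∫ x in Ioi (0:ℝ), (x:ℂ) ^ (1 - s) / (1 + (x:ℂ) ^ 2)
      = ↑π / (2 * Complex.sin (π * s / 2)) := by
  set c : ℂ := 1 - s / 2 with hc
  have hcre : c.re = 1 - s.re / 2 := by
    rw [hc]
    simp [Complex.sub_re, Complex.div_re, Complex.normSq]
  have hc0 : 0 < c.re := by rw [hcre]; linarith
  have hc1 : c.re < 1 := by rw [hcre]; linarith
  have key := MeasureTheory.integral_comp_rpow_Ioi_of_pos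
    (g := fun u : ℝ => (u:ℂ) ^ (c - 1) / (1 + (u:ℂ))) (p := 2) two_pos
  have congr1 : ∀ x ∈ Ioi (0:ℝ),
      ((2 : ℝ) * x ^ ((2:ℝ) - 1)) • ((((x ^ (2:ℝ) : ℝ)):ℂ) ^ (c - 1) / (1 + ((x ^ (2:ℝ) : ℝ):ℂ)))
        = 2 * ((x:ℂ) ^ (1 - s) / (1 + (x:ℂ) ^ 2)) := by
    intro x hx
    have hx0 : (0:ℝ) < x := hx
    have hxC : (x:ℂ) ≠ 0 := by exact_mod_cast hx0.ne'
    have hsq : (x ^ (2:ℝ) : ℝ) = x * x := by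
      rw [show (2:ℝ) = ((2:ℕ):ℝ) by norm_num, Real.rpow_natCast]; ring
    have hpow : (((x ^ (2:ℝ) : ℝ)):ℂ) ^ (c - 1) = (x:ℂ) ^ ((c - 1) + (c - 1)) := by
      rw [hsq, ofReal_mul, mul_cpow_ofReal_nonneg hx0.le hx0.le, ← Complex.cpow_add _ _ hxC]
    rw [hpow, real_smul]
    have hx1 : (x : ℝ) ^ ((2:ℝ) - 1) = x := by norm_num
    rw [hx1]
    push_cast
    rw [show ((x ^ (2:ℝ) : ℝ):ℂ) = (x:ℂ)^2 by rw [hsq]; push_cast; ring]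
    have hes : (1:ℂ) - s = 1 + ((c - 1) + (c - 1)) := by rw [hc]; ring
    have hxx : (x:ℂ) ^ (1 - s) = (x:ℂ) * (x:ℂ) ^ ((c - 1) + (c - 1)) := by
      rw [hes]
      conv_lhs => rw [Complex.cpow_add _ _ hxC, Complex.cpow_one]
    rw [hxx]
    ring
  rw [setIntegral_congr_fun measurableSet_Ioi congr1] at key
  rw [integral_cpow_div_one_add_Ioi hc0 hc1] at key
  have hsin : Complex.sin ((π:ℂ) * c) = Complex.sin ((π:ℂ) * s / 2) := by
    rw [show (π:ℂ) * c = ↑π - ↑π * s / 2 by rw [hc]; ring, Complex.sin_pi_sub]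
  rw [hsin, MeasureTheory.integral_const_mul] at key
  rw [mul_comm (2:ℂ), ← div_div, ← key]
  exact (mul_div_cancel_left₀ _ (two_ne_zero)).symm

lemma log_le_rpow_div' {y ε : ℝ} (hy : 0 < y) (hε : 0 < ε) : Real.log y ≤ y ^ ε / ε := by
  rw [le_div_iff₀ hε]
  have h1 := Real.log_le_sub_one_of_pos (Real.rpow_pos_of_pos hy ε)
  rw [Real.log_rpow hy] at h1
  nlinarith [Real.rpow_pos_of_pos hy ε]

lemma norm_ofReal_mul_cpow {x : ℝ} (hx : 0 < x) {L : ℝ} (hL : 0 ≤ L) (w : ℂ) :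
    ‖(L:ℂ) * (x:ℂ) ^ w‖ = L * x ^ w.re := by
  rw [norm_mul, Complex.norm_real, Real.norm_of_nonneg hL,
    Complex.norm_cpow_eq_rpow_re_of_pos hx]

/-- Mellin-transform identity: for `0 < Re(s) < 2`,
`∫_0^∞ log(1+x²) · x^{-1-s} dx = π / (s sin(πs/2))`. -/
theorem integral_log_one_add_sq_rpow (s : ℂ) (h0 : 0 < s.re) (h2 : s.re < 2) :
    ∫ x : ℝ in Set.Ioi (0 : ℝ),
        (Real.log (1 + x ^ 2) : ℂ) * (x : ℂ) ^ (-1 - s) =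
      (Real.pi : ℂ) / (s * Complex.sin (Real.pi * s / 2)) := by
  have hs0 : s ≠ 0 := fun h => by simp [h] at h0
  set σ : ℝ := s.re with hσ
  set g : ℝ → ℂ := fun x => (Real.log (1 + x ^ 2) : ℂ) * (x : ℂ) ^ (-1 - s) with hg
  set h : ℝ → ℂ := fun x => (x:ℂ) ^ (1 - s) / (1 + (x:ℂ) ^ 2) with hh
  set F : ℝ → ℂ := fun x => -((Real.log (1 + x ^ 2) : ℂ) * (x : ℂ) ^ (-s)) / s with hF
  -- basic facts
  have hlognn : ∀ x : ℝ, 0 ≤ Real.log (1 + x ^ 2) := fun x =>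
    Real.log_nonneg (by nlinarith [sq_nonneg x])
  have hdenC : ∀ x : ℝ, ((1:ℂ) + (x:ℂ) ^ 2) = ((1 + x ^ 2 : ℝ) : ℂ) := fun x => by push_cast; ring
  have hdenne : ∀ x : ℝ, ((1:ℂ) + (x:ℂ) ^ 2) ≠ 0 := fun x => by
    rw [hdenC]
    exact_mod_cast (by positivity : (0:ℝ) < 1 + x ^ 2).ne'
  -- norms
  have ng : ∀ x : ℝ, 0 < x → ‖g x‖ = Real.log (1 + x ^ 2) * x ^ (-1 - σ) := by
    intro x hx
    rw [hg]
    rw [norm_ofReal_mul_cpow hx (hlognn x)]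
    congr 1
  have nh : ∀ x : ℝ, 0 < x → ‖h x‖ = x ^ (1 - σ) / (1 + x ^ 2) := by
    intro x hx
    rw [hh]
    simp only [norm_div, hdenC]
    rw [Complex.norm_cpow_eq_rpow_re_of_pos hx,
      Complex.norm_real, Real.norm_of_nonneg (by positivity : (0:ℝ) ≤ 1 + x ^ 2)]
    congr 2
  -- continuity
  have contg : ContinuousOn g (Ioi 0) := by
    intro x hx
    apply ContinuousAt.continuousWithinAt
    exact (Complex.continuous_ofReal.continuousAt.comp
      ((Real.continuousAt_log (by positivity : (1:ℝ) + x ^ 2 ≠ 0)).comp (f := fun y : ℝ => 1 + y ^ 2)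
        ((by fun_prop : Continuous fun y : ℝ => 1 + y ^ 2).continuousAt))).mul
      (continuousAt_ofReal_cpow_const x _ (Or.inr (ne_of_gt hx)))
  have conth : ContinuousOn h (Ioi 0) := by
    intro x hx
    apply ContinuousAt.continuousWithinAt
    exact (continuousAt_ofReal_cpow_const x _ (Or.inr (ne_of_gt hx))).div
      ((continuous_const.add (Complex.continuous_ofReal.pow 2)).continuousAt)
      (hdenne x)
  -- integrability of the bound on (0,1]
  have hb01 : IntegrableOn (fun x : ℝ => x ^ (1 - σ)) (Ioc (0:ℝ) 1) :=
    (intervalIntegrable_iff_integrableOn_Ioc_of_le zero_le_one).mp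
      (intervalIntegral.intervalIntegrable_rpow' (by linarith))
  have hg1 : IntegrableOn g (Ioc 0 1) := by
    refine hb01.mono' ((contg.mono Ioc_subset_Ioi_self).aestronglyMeasurable measurableSet_Ioc) ?_
    rw [ae_restrict_iff' measurableSet_Ioc]
    filter_upwards with x hx
    obtain ⟨hx0, hx1⟩ := hx
    rw [ng x hx0]
    have hlog : Real.log (1 + x ^ 2) ≤ x ^ 2 := by
      have := Real.log_le_sub_one_of_pos (by positivity : (0:ℝ) < 1 + x ^ 2)
      linarith
    have hxx : (x:ℝ) ^ (2:ℕ) * x ^ (-1 - σ) = x ^ (1 - σ) := by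
      rw [← Real.rpow_natCast x 2, ← Real.rpow_add hx0]
      congr 1
      push_cast
      ring
    calc Real.log (1 + x ^ 2) * x ^ (-1 - σ)
        ≤ x ^ 2 * x ^ (-1 - σ) :=
          mul_le_mul_of_nonneg_right hlog (Real.rpow_nonneg hx0.le _)
      _ = x ^ (1 - σ) := hxx
  have hg2 : IntegrableOn g (Ioi 1) := by
    set ε : ℝ := σ / 4 with hε
    have hε0 : 0 < ε := by rw [hε]; linarith
    have hb : IntegrableOn (fun x : ℝ => 2 ^ ε / ε * x ^ (-1 - σ/2)) (Ioi (1:ℝ)) :=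
      (integrableOn_Ioi_rpow_of_lt (by linarith) one_pos).const_mul _
    refine hb.mono' ((contg.mono (Ioi_subset_Ioi zero_le_one)).aestronglyMeasurable
      measurableSet_Ioi) ?_
    rw [ae_restrict_iff' measurableSet_Ioi]
    filter_upwards with x hx1
    have hx0 : (0:ℝ) < x := lt_trans one_pos hx1
    rw [ng x hx0]
    have l3 : ((2:ℝ) * x ^ 2) ^ ε = 2 ^ ε * x ^ (σ/2) := by
      rw [Real.mul_rpow (by norm_num) (by positivity), ← Real.rpow_natCast x 2,
        ← Real.rpow_mul hx0.le]
      congr 1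
      rw [hε]; push_cast; ring
    have hlog : Real.log (1 + x ^ 2) ≤ 2 ^ ε / ε * x ^ (σ/2) := by
      calc Real.log (1 + x ^ 2) ≤ (1 + x ^ 2) ^ ε / ε := log_le_rpow_div' (by positivity) hε0
        _ ≤ ((2:ℝ) * x ^ 2) ^ ε / ε := by
            gcongr
            · nlinarith [mem_Ioi.mp hx1]
        _ = 2 ^ ε / ε * x ^ (σ/2) := by rw [l3]; ring
    have hmul : x ^ (σ/2) * x ^ (-1 - σ) = x ^ (-1 - σ/2) := by
      rw [← Real.rpow_add hx0]; congr 1; ring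
    have hbnd : 0 ≤ x ^ (-1-σ) := Real.rpow_nonneg hx0.le _
    calc Real.log (1 + x ^ 2) * x ^ (-1 - σ)
        ≤ (2 ^ ε / ε * x ^ (σ/2)) * x ^ (-1 - σ) :=
          mul_le_mul_of_nonneg_right hlog hbnd
      _ = 2 ^ ε / ε * x ^ (-1 - σ/2) := by rw [mul_assoc, hmul]
  have hgint : IntegrableOn g (Ioi 0) := by
    rw [← Ioc_union_Ioi_eq_Ioi (zero_le_one (α := ℝ))]
    exact hg1.union hg2
  have hh1 : IntegrableOn h (Ioc 0 1) := by
    refine hb01.mono' ((conth.mono Ioc_subset_Ioi_self).aestronglyMeasurable measurableSet_Ioc) ?_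
    rw [ae_restrict_iff' measurableSet_Ioc]
    filter_upwards with x hx
    obtain ⟨hx0, hx1⟩ := hx
    rw [nh x hx0]
    exact div_le_self (Real.rpow_nonneg hx0.le _) (by nlinarith)
  have hh2 : IntegrableOn h (Ioi 1) := by
    have hb : IntegrableOn (fun x : ℝ => x ^ (-1 - σ)) (Ioi (1:ℝ)) :=
      integrableOn_Ioi_rpow_of_lt (by linarith) one_pos
    refine hb.mono' ((conth.mono (Ioi_subset_Ioi zero_le_one)).aestronglyMeasurable
      measurableSet_Ioi) ?_
    rw [ae_restrict_iff' measurableSet_Ioi]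
    filter_upwards with x hx1
    have hx0 : (0:ℝ) < x := lt_trans one_pos hx1
    rw [nh x hx0]
    calc x ^ (1 - σ) / (1 + x ^ 2) ≤ x ^ (1 - σ) / x ^ (2:ℕ) := by
          gcongr <;> nlinarith [Real.rpow_nonneg hx0.le (1 - σ), sq_nonneg x, hx0]
      _ = x ^ (-1 - σ) := by
          rw [← Real.rpow_natCast x 2, ← Real.rpow_sub hx0]
          congr 1
          push_cast
          ring
  have hhint : IntegrableOn h (Ioi 0) := by
    rw [← Ioc_union_Ioi_eq_Ioi (zero_le_one (α := ℝ))]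
    exact hh1.union hh2
  -- derivative of F
  have hFderiv : ∀ x ∈ Ioi (0:ℝ), HasDerivAt F (g x - 2 / s * h x) x := by
    intro x hx
    have hx0 : (0:ℝ) < x := hx
    have hxC : (x:ℂ) ≠ 0 := by exact_mod_cast hx0.ne'
    have hLr : HasDerivAt (fun x : ℝ => Real.log (1 + x ^ 2)) (2 * x / (1 + x ^ 2)) x := by
      have h1 : HasDerivAt (fun x : ℝ => 1 + x ^ 2) (2 * x) x := by
        simpa using (hasDerivAt_pow 2 x).const_add 1
      simpa using h1.log (by positivity)
    have hL := hLr.ofReal_comp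
    have hP : HasDerivAt (fun y : ℝ => (y:ℂ) ^ (-s)) (-s * (x:ℂ) ^ (-s - 1)) x := by
      have hr : (-s - 1 : ℂ) ≠ -1 := by
        intro hcon
        apply hs0
        linear_combination -hcon
      have hd := hasDerivAt_ofReal_cpow_const' hx0.ne' hr
      rw [show (-s - 1 + 1 : ℂ) = -s by ring] at hd
      have hd2 := hd.const_mul (-s)
      have hfun : (fun y : ℝ => -s * ((y:ℂ) ^ (-s) / (-s))) = fun y : ℝ => (y:ℂ) ^ (-s) := by
        funext y
        field_simp
      rw [hfun] at hd2
      exact hd2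
    have hFd := ((hL.mul hP).neg).div_const s
    refine hFd.congr_deriv ?_
    symm
    have e1 : (x:ℂ) ^ (-s - 1) = (x:ℂ) ^ (-1 - s) := by congr 1; ring
    have e2 : (x:ℂ) ^ (1 - s) = (x:ℂ) * (x:ℂ) ^ (-s) := by
      rw [show (1 - s : ℂ) = 1 + (-s) by ring, Complex.cpow_add _ _ hxC, Complex.cpow_one]
    have e3 : (x:ℂ) ^ (-s) = (x:ℂ) * (x:ℂ) ^ (-1 - s) := by
      rw [show (-s : ℂ) = 1 + (-1 - s) by ring, Complex.cpow_add _ _ hxC, Complex.cpow_one]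
    rw [hg, hh]
    simp only []
    rw [e1, e2, e3]
    push_cast
    field_simp [hs0, hdenne x]
    ring
  -- norm of F
  have nF : ∀ x : ℝ, 0 < x → ‖F x‖ = Real.log (1 + x ^ 2) * x ^ (-σ) / ‖s‖ := by
    intro x hx
    rw [hF]
    simp only [norm_div, norm_neg]
    rw [norm_ofReal_mul_cpow hx (hlognn x)]
    congr 1
  -- limit at infinity
  have htop : Tendsto F atTop (𝓝 0) := by
    set ε : ℝ := σ / 4 with hε
    have hε0 : 0 < ε := by rw [hε]; linarith
    apply squeeze_zero_norm' (a := fun x : ℝ => 2 ^ ε / ε / ‖s‖ * x ^ (-(σ/2)))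
    · filter_upwards [eventually_ge_atTop (1:ℝ)] with x hx1
      have hx0 : (0:ℝ) < x := lt_of_lt_of_le one_pos hx1
      rw [nF x hx0]
      have l3 : ((2:ℝ) * x ^ 2) ^ ε = 2 ^ ε * x ^ (σ/2) := by
        rw [Real.mul_rpow (by norm_num) (by positivity), ← Real.rpow_natCast x 2,
          ← Real.rpow_mul hx0.le]
        congr 1
        rw [hε]; push_cast; ring
      have hlog : Real.log (1 + x ^ 2) ≤ 2 ^ ε / ε * x ^ (σ/2) := by
        calc Real.log (1 + x ^ 2) ≤ (1 + x ^ 2) ^ ε / ε := log_le_rpow_div' (by positivity) hε0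
          _ ≤ ((2:ℝ) * x ^ 2) ^ ε / ε := by
              gcongr
              · nlinarith
          _ = 2 ^ ε / ε * x ^ (σ/2) := by rw [l3]; ring
      have hmul : x ^ (σ/2) * x ^ (-σ) = x ^ (-(σ/2)) := by
        rw [← Real.rpow_add hx0]; congr 1; ring
      calc Real.log (1 + x ^ 2) * x ^ (-σ) / ‖s‖
          ≤ (2 ^ ε / ε * x ^ (σ/2)) * x ^ (-σ) / ‖s‖ := by
            gcongr
        _ = 2 ^ ε / ε / ‖s‖ * x ^ (-(σ/2)) := by rw [mul_assoc, hmul]; ring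
    · have := (tendsto_rpow_neg_atTop (by linarith : (0:ℝ) < σ/2)).const_mul (2 ^ ε / ε / ‖s‖)
      simpa using this
  -- value and continuity at 0
  have hF0 : F 0 = 0 := by
    rw [hF]
    norm_num
  have hcont : ContinuousWithinAt F (Ici 0) 0 := by
    rw [ContinuousWithinAt, hF0]
    apply squeeze_zero_norm' (a := fun x : ℝ => x ^ (2 - σ) / ‖s‖)
    · filter_upwards [Ico_mem_nhdsGE_of_mem (by norm_num : (0:ℝ) ∈ Ico 0 1)] with x hx
      obtain ⟨hx0, hx1⟩ := hx
      rcases eq_or_lt_of_le hx0 with rfl | hx0'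
      · rw [hF0]
        simp only [norm_zero]
        positivity
      · rw [nF x hx0']
        have hlog : Real.log (1 + x ^ 2) ≤ x ^ 2 := by
          have := Real.log_le_sub_one_of_pos (by positivity : (0:ℝ) < 1 + x ^ 2)
          linarith
        have hxx : (x:ℝ) ^ (2:ℕ) * x ^ (-σ) = x ^ (2 - σ) := by
          rw [← Real.rpow_natCast x 2, ← Real.rpow_add hx0']
          norm_num
          ring_nf
        gcongr ?_ / ‖s‖
        calc Real.log (1 + x ^ 2) * x ^ (-σ)
            ≤ x ^ 2 * x ^ (-σ) :=
              mul_le_mul_of_nonneg_right hlog (Real.rpow_nonneg hx0'.le _)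
          _ = x ^ (2 - σ) := hxx
    · have : Tendsto (fun x : ℝ => x ^ (2 - σ)) (𝓝[Ici 0] 0) (𝓝 (0 ^ (2 - σ))) :=
        (Real.continuousAt_rpow_const 0 (2 - σ) (Or.inr (by linarith))).continuousWithinAt
      rw [Real.zero_rpow (by intro hcon; linarith : (2:ℝ) - σ ≠ 0)] at this
      simpa using this.div_const ‖s‖
  -- integration by parts
  have hFint : IntegrableOn (fun x => g x - 2 / s * h x) (Ioi 0) :=
    hgint.sub (hhint.const_mul _)
  have hibp := integral_Ioi_of_hasDerivAt_of_tendsto hcont hFderiv hFint htop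
  rw [hF0, integral_sub hgint (hhint.const_mul _), MeasureTheory.integral_const_mul] at hibp
  have hInt : ∫ x in Ioi (0:ℝ), g x = 2 / s * ∫ x in Ioi (0:ℝ), h x := by
    linear_combination hibp
  have hπ : (π:ℂ) ≠ 0 := Complex.ofReal_ne_zero.mpr Real.pi_ne_zero
  have hsin : Complex.sin (↑π * s / 2) ≠ 0 := by
    intro hzero
    obtain ⟨k, hk⟩ := Complex.sin_eq_zero_iff.mp hzero
    have hs2 : s = 2 * (k:ℂ) := by
      have h' : (π:ℂ) * s = (π:ℂ) * (2 * k) := by linear_combination 2 * hk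
      exact mul_left_cancel₀ hπ h'
    have hσ2 : σ = 2 * (k:ℝ) := by rw [hσ, hs2]; simp
    have hk0 : (0:ℤ) < k := by
      have : (0:ℝ) < (k:ℝ) := by rw [hσ2] at h0; linarith
      exact_mod_cast this
    have hk1 : (k:ℤ) < 1 := by
      have : (k:ℝ) < 1 := by rw [hσ2] at h2; linarith
      exact_mod_cast this
    omega
  rw [hInt, hh, integral_cpow_div_one_add_sq_Ioi h0 h2]
  field_simp
end

section
/- There is a constant C > 0 such that for all real σ ≥ 2 and all real t ≥ 2(σ + 2), |Γ(σ + 2 + it)| ≤ C · t^{σ + 3/2} · e^{−t}. -/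
open Complex MeasureTheory Set

lemma abs_Gamma_le (s : ℂ) (hs : 0 < s.re) :
    ‖Complex.Gamma s‖ ≤ Real.Gamma s.re := by
  rw [Complex.Gamma_eq_integral hs, Real.Gamma_eq_integral hs,
    Complex.GammaIntegral]
  refine le_trans (norm_integral_le_integral_norm _) (le_of_eq ?_)
  refine setIntegral_congr_fun measurableSet_Ioi fun x hx => ?_
  rw [norm_mul, Complex.norm_cpow_eq_rpow_re_of_pos hx]
  simp [Complex.norm_exp, _root_.abs_of_nonneg (Real.exp_pos _).le]

lemma abs_Gamma_mul_pow_le (t : ℝ) (ht : 0 < t) :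
    ∀ n : ℕ, ∀ s : ℂ, 0 < s.re → t ≤ |s.im| →
      ‖Complex.Gamma s‖ * t ^ n ≤ Real.Gamma (s.re + n) := by
  intro n
  induction n with
  | zero => intro s hs hst; simpa using abs_Gamma_le s hs
  | succ n ih =>
    intro s hs hst
    have hsne : s ≠ 0 := by
      intro h
      rw [h] at hst
      simp at hst
      linarith
    have h1 : ‖Complex.Gamma (s + 1)‖ = ‖s‖ * ‖Complex.Gamma s‖ := by
      rw [Complex.Gamma_add_one s hsne, norm_mul]
    have habs : t ≤ ‖s‖ := le_trans hst (Complex.abs_im_le_norm s)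
    have key : ‖Complex.Gamma s‖ * t ^ (n + 1) ≤
        ‖Complex.Gamma (s + 1)‖ * t ^ n := by
      rw [pow_succ, h1]
      calc ‖Complex.Gamma s‖ * (t ^ n * t)
          = (‖Complex.Gamma s‖ * t) * t ^ n := by ring
        _ ≤ (‖s‖ * ‖Complex.Gamma s‖) * t ^ n := by
            apply mul_le_mul_of_nonneg_right _ (by positivity)
            rw [mul_comm (‖s‖)]
            exact mul_le_mul_of_nonneg_left habs (by positivity)
        _ = _ := rfl
    refine key.trans ?_
    have := ih (s + 1) (by simp; linarith) (by simpa using hst)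
    simpa [add_assoc, add_comm (1:ℝ)] using this

lemma factorial_stirling_le (n : ℕ) (hn : 1 ≤ n) :
    (n.factorial : ℝ) ≤ Real.exp 1 * (n : ℝ) ^ ((n : ℝ) + 1/2) * Real.exp (-(n:ℝ)) := by
  have hn0 : (0:ℝ) < n := by exact_mod_cast hn
  have hden : (0:ℝ) < Real.sqrt (2 * n) * ((n : ℝ) / Real.exp 1) ^ n := by positivity
  have hpos : 0 < Stirling.stirlingSeq n := by
    rw [Stirling.stirlingSeq]
    positivity
  have hle : Stirling.stirlingSeq n ≤ Stirling.stirlingSeq 1 := by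
    obtain ⟨m, rfl⟩ : ∃ m, n = m + 1 := ⟨n - 1, by omega⟩
    have h := Stirling.log_stirlingSeq'_antitone (Nat.zero_le m)
    simp only [Function.comp] at h
    have h1 : 0 < Stirling.stirlingSeq (Nat.succ 0) := by
      rw [Stirling.stirlingSeq_one]; positivity
    exact (Real.log_le_log_iff hpos h1).mp h
  rw [Stirling.stirlingSeq_one] at hle
  have hfact : (n.factorial : ℝ) = Stirling.stirlingSeq n * (Real.sqrt (2 * n) * ((n : ℝ) / Real.exp 1) ^ n) := by
    rw [Stirling.stirlingSeq]
    field_simp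
  rw [hfact]
  have step1 : Stirling.stirlingSeq n * (Real.sqrt (2 * n) * ((n : ℝ) / Real.exp 1) ^ n) ≤
      (Real.exp 1 / Real.sqrt 2) * (Real.sqrt (2 * n) * ((n : ℝ) / Real.exp 1) ^ n) :=
    mul_le_mul_of_nonneg_right hle hden.le
  refine step1.trans (le_of_eq ?_)
  rw [Real.sqrt_mul (by norm_num : (0:ℝ) ≤ 2), div_pow, Real.exp_neg]
  have h2 : (0:ℝ) < Real.sqrt 2 := by positivity
  have hen : (Real.exp 1) ^ n = Real.exp (n : ℝ) := by
    rw [← Real.exp_nat_mul]; ring_nf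
  have hnn : (n:ℝ) ^ ((n : ℝ) + 1/2) = (n:ℝ) ^ n * Real.sqrt n := by
    rw [Real.rpow_add hn0, Real.rpow_natCast, Real.sqrt_eq_rpow]
  rw [hnn, hen]
  field_simp

lemma Gamma_stirling_le (x : ℝ) (hx : 2 ≤ x) :
    Real.Gamma x ≤ Real.exp 3 * x ^ (x - 1/2) * Real.exp (-x) := by
  obtain ⟨k, hk⟩ : ∃ k : ℕ, ⌊x⌋₊ = k := ⟨⌊x⌋₊, rfl⟩
  have hk2 : 2 ≤ k := hk ▸ Nat.le_floor (by exact_mod_cast hx)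
  have hk0 : (0:ℝ) < k := by
    have : (0:ℕ) < k := by omega
    exact_mod_cast this
  have hkx : (k:ℝ) ≤ x := hk ▸ Nat.floor_le (by linarith)
  have hxk : x < (k:ℝ) + 1 := by
    have := Nat.lt_floor_add_one x
    rw [hk] at this
    exact_mod_cast this
  set θ : ℝ := x - k with hθ
  have hθ0 : 0 ≤ θ := by simp [hθ]; linarith
  have hθ1 : θ < 1 := by simp [hθ]; linarith
  have hGk : 0 < Real.Gamma (k:ℝ) := Real.Gamma_pos_of_pos hk0
  have hGx : 0 < Real.Gamma x := Real.Gamma_pos_of_pos (by linarith)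
  -- log-convexity step: Γ(x) ≤ Γ(k) * k^θ
  have h1 : Real.Gamma x ≤ Real.Gamma (k:ℝ) * (k:ℝ) ^ θ := by
    have hcx := Real.convexOn_log_Gamma.2 (Set.mem_Ioi.mpr hk0)
      (Set.mem_Ioi.mpr (by linarith : (0:ℝ) < (k:ℝ) + 1)) (by linarith : (0:ℝ) ≤ 1 - θ)
      hθ0 (by ring)
    have hpt : (1 - θ) • (k:ℝ) + θ • ((k:ℝ) + 1) = x := by
      simp only [smul_eq_mul]; ring
    rw [hpt] at hcx
    simp only [Function.comp, smul_eq_mul] at hcx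
    have hG1 : Real.Gamma ((k:ℝ) + 1) = (k:ℝ) * Real.Gamma (k:ℝ) :=
      Real.Gamma_add_one (ne_of_gt hk0)
    have hrhs : (1 - θ) * Real.log (Real.Gamma (k:ℝ)) + θ * Real.log (Real.Gamma ((k:ℝ) + 1))
        = Real.log (Real.Gamma (k:ℝ) * (k:ℝ) ^ θ) := by
      rw [hG1, Real.log_mul (ne_of_gt hk0) (ne_of_gt hGk),
        Real.log_mul (ne_of_gt hGk) (ne_of_gt (Real.rpow_pos_of_pos hk0 θ)),
        Real.log_rpow hk0]
      ring
    rw [hrhs] at hcx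
    exact (Real.log_le_log_iff hGx (by positivity)).mp hcx
  -- Γ(k) = (k-1)!
  obtain ⟨m, rfl⟩ : ∃ m, k = m + 1 := ⟨k - 1, by omega⟩
  have hm1 : 1 ≤ m := by omega
  have hGkf : Real.Gamma ((m + 1 : ℕ) : ℝ) = (m.factorial : ℝ) := by
    rw [Nat.cast_add, Nat.cast_one, Real.Gamma_nat_eq_factorial]
  have hm0 : (0:ℝ) < m := by exact_mod_cast hm1
  have h2 : (m.factorial : ℝ) ≤ Real.exp 1 * ((m:ℝ)+1) ^ ((m:ℝ) + 1/2) * Real.exp (-(m:ℝ)) := by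
    refine (factorial_stirling_le m hm1).trans ?_
    have : (m:ℝ) ^ ((m:ℝ) + 1/2) ≤ ((m:ℝ)+1) ^ ((m:ℝ) + 1/2) :=
      Real.rpow_le_rpow hm0.le (by linarith) (by positivity)
    have he : (0:ℝ) < Real.exp (-(m:ℝ)) := Real.exp_pos _
    exact mul_le_mul_of_nonneg_right
      (mul_le_mul_of_nonneg_left this (Real.exp_pos 1).le) he.le
  have hck : ((m + 1 : ℕ) : ℝ) = (m:ℝ) + 1 := by push_cast; ring
  rw [hck] at h1 hk0 hkx hxk
  -- combine
  have key : Real.Gamma x ≤ Real.exp 1 * ((m:ℝ)+1) ^ (x - 1/2) * Real.exp (-(m:ℝ)) := by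
    calc Real.Gamma x ≤ Real.Gamma ((m + 1 : ℕ) : ℝ) * ((m:ℝ)+1) ^ θ := by rw [hck]; exact h1
      _ = (m.factorial : ℝ) * ((m:ℝ)+1) ^ θ := by rw [hGkf]
      _ ≤ (Real.exp 1 * ((m:ℝ)+1) ^ ((m:ℝ) + 1/2) * Real.exp (-(m:ℝ))) * ((m:ℝ)+1) ^ θ := by
          apply mul_le_mul_of_nonneg_right h2 (by positivity)
      _ = Real.exp 1 * (((m:ℝ)+1) ^ ((m:ℝ) + 1/2) * ((m:ℝ)+1) ^ θ) * Real.exp (-(m:ℝ)) := by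
          ring
      _ = Real.exp 1 * ((m:ℝ)+1) ^ ((m:ℝ) + 1/2 + θ) * Real.exp (-(m:ℝ)) := by
          rw [Real.rpow_add hk0 ((m:ℝ) + 1/2) θ]
      _ = Real.exp 1 * ((m:ℝ)+1) ^ (x - 1/2) * Real.exp (-(m:ℝ)) := by
          congr 1
          congr 1
          simp only [hθ, hck]
          ring
  refine key.trans ?_
  have hb : ((m:ℝ)+1) ^ (x - 1/2) ≤ x ^ (x - 1/2) :=
    Real.rpow_le_rpow (by positivity) hkx (by linarith)
  have he : Real.exp (-(m:ℝ)) ≤ Real.exp 2 * Real.exp (-x) := by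
    rw [← Real.exp_add]
    apply Real.exp_le_exp.mpr
    linarith
  calc Real.exp 1 * ((m:ℝ)+1) ^ (x - 1/2) * Real.exp (-(m:ℝ))
      ≤ Real.exp 1 * x ^ (x - 1/2) * (Real.exp 2 * Real.exp (-x)) := by
        apply mul_le_mul (mul_le_mul_of_nonneg_left hb (Real.exp_pos 1).le) he
          (Real.exp_pos _).le (by positivity)
    _ = Real.exp 3 * x ^ (x - 1/2) * Real.exp (-x) := by
        rw [show (3:ℝ) = 1 + 2 by norm_num, Real.exp_add]; ring

/-- Stirling-type bound: there is a constant `C > 0` such that for all `σ ≥ 2` and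
`t ≥ 2(σ+2)`, `|Γ(σ + 2 + it)| ≤ C · t^(σ+3/2) · e^(-t)`. -/
theorem gamma_vertical_decay_bound :
    ∃ C : ℝ, 0 < C ∧ ∀ σ : ℝ, 2 ≤ σ → ∀ t : ℝ, 2 * (σ + 2) ≤ t →
      ‖Complex.Gamma ((σ : ℂ) + 2 + t * Complex.I)‖ ≤
        C * t ^ (σ + 3 / 2) * Real.exp (-t) := by
  refine ⟨Real.exp 5, Real.exp_pos 5, fun σ hσ t ht => ?_⟩
  set a : ℝ := σ + 2 with ha
  have ha4 : 4 ≤ a := by simp [ha]; linarith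
  have hta : 2 * a ≤ t := ht
  have ht8 : 8 ≤ t := by linarith
  have ht0 : (0:ℝ) < t := by linarith
  set s : ℂ := (σ : ℂ) + 2 + t * Complex.I with hs
  have hre : s.re = a := by simp [hs, ha]
  have him : s.im = t := by simp [hs]
  set n : ℕ := ⌈t - a⌉₊ with hn
  have hn1 : t - a ≤ (n : ℝ) := Nat.le_ceil _
  have hn2 : (n : ℝ) < t - a + 1 := by
    have := Nat.ceil_lt_add_one (show (0:ℝ) ≤ t - a by linarith)
    exact_mod_cast this
  set x : ℝ := a + n with hx
  have htx : t ≤ x := by simp [hx]; linarith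
  have hxt1 : x ≤ t + 1 := by simp [hx]; linarith
  have hx0 : (0:ℝ) < x := by linarith
  have hmain : ‖Complex.Gamma s‖ * t ^ n ≤ Real.Gamma x := by
    have := abs_Gamma_mul_pow_le t ht0 n s (by rw [hre]; linarith)
      (by rw [him]; exact le_abs_self t)
    rwa [hre] at this
  have hG := Gamma_stirling_le x (by linarith)
  -- estimate x ^ (x - 1/2)
  have h0t1 : (0:ℝ) < t + 1 := by linarith
  have hA : x ^ (x - 1/2) ≤ (t+1) ^ (x - 1/2) :=
    Real.rpow_le_rpow hx0.le hxt1 (by linarith)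
  have hB : (t+1) ^ (x - 1/2) = (t+1) ^ (a - 1/2) * (t+1) ^ n := by
    rw [show x - 1/2 = (a - 1/2) + (n:ℝ) by simp [hx]; ring, Real.rpow_add h0t1,
      Real.rpow_natCast]
  have hC : t + 1 ≤ t * Real.exp (1/t) := by
    have := Real.add_one_le_exp (1/t)
    have h := mul_le_mul_of_nonneg_left this ht0.le
    rw [mul_add, mul_one_div, div_self (ne_of_gt ht0)] at h
    linarith
  have hD : (t+1) ^ (a - 1/2) ≤ t ^ (a - 1/2) * Real.exp (1/2) := by
    calc (t+1) ^ (a - 1/2) ≤ (t * Real.exp (1/t)) ^ (a - 1/2) :=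
          Real.rpow_le_rpow h0t1.le hC (by linarith)
      _ = t ^ (a - 1/2) * Real.exp (1/t) ^ (a - 1/2) :=
          Real.mul_rpow ht0.le (Real.exp_pos _).le
      _ = t ^ (a - 1/2) * Real.exp ((1/t) * (a - 1/2)) := by rw [← Real.exp_mul]
      _ ≤ t ^ (a - 1/2) * Real.exp (1/2) := by
          apply mul_le_mul_of_nonneg_left _ (Real.rpow_pos_of_pos ht0 _).le
          apply Real.exp_le_exp.mpr
          rw [div_mul_eq_mul_div, one_mul, div_le_iff₀ ht0]
          linarith
  have hE : (t+1) ^ n ≤ t ^ n * Real.exp 1 := by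
    calc (t+1) ^ n ≤ (t * Real.exp (1/t)) ^ n := pow_le_pow_left₀ h0t1.le hC n
      _ = t ^ n * Real.exp (1/t) ^ n := mul_pow _ _ _
      _ = t ^ n * Real.exp ((n:ℝ) * (1/t)) := by rw [Real.exp_nat_mul]
      _ ≤ t ^ n * Real.exp 1 := by
          apply mul_le_mul_of_nonneg_left _ (pow_pos ht0 n).le
          apply Real.exp_le_exp.mpr
          rw [mul_one_div, div_le_one ht0]
          linarith
  have hexpx : Real.exp (-x) ≤ Real.exp (-t) := Real.exp_le_exp.mpr (by linarith)
  have hfinal : Real.Gamma x ≤ Real.exp 5 * t ^ (a - 1/2) * Real.exp (-t) * t ^ n := by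
    calc Real.Gamma x ≤ Real.exp 3 * x ^ (x - 1/2) * Real.exp (-x) := hG
      _ ≤ Real.exp 3 * ((t ^ (a - 1/2) * Real.exp (1/2)) * (t ^ n * Real.exp 1)) *
            Real.exp (-t) := by
          apply mul_le_mul _ hexpx (Real.exp_pos _).le (by positivity)
          apply mul_le_mul_of_nonneg_left _ (Real.exp_pos 3).le
          calc x ^ (x - 1/2) ≤ (t+1) ^ (a - 1/2) * (t+1) ^ n := by rw [← hB]; exact hA
            _ ≤ (t ^ (a - 1/2) * Real.exp (1/2)) * (t ^ n * Real.exp 1) :=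
              mul_le_mul hD hE (by positivity) (by positivity)
      _ = (Real.exp 3 * Real.exp (1/2) * Real.exp 1) * t ^ (a - 1/2) * Real.exp (-t) * t ^ n := by
          ring
      _ ≤ Real.exp 5 * t ^ (a - 1/2) * Real.exp (-t) * t ^ n := by
          have : Real.exp 3 * Real.exp (1/2) * Real.exp 1 ≤ Real.exp 5 := by
            rw [← Real.exp_add, ← Real.exp_add]
            apply Real.exp_le_exp.mpr
            norm_num
          apply mul_le_mul_of_nonneg_right _ (pow_pos ht0 n).le
          apply mul_le_mul_of_nonneg_right _ (Real.exp_pos _).le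
          exact mul_le_mul_of_nonneg_right this (Real.rpow_pos_of_pos ht0 _).le
  have hres : ‖Complex.Gamma s‖ * t ^ n ≤
      (Real.exp 5 * t ^ (a - 1/2) * Real.exp (-t)) * t ^ n := by
    refine hmain.trans ?_
    linarith [hfinal]
  have := le_of_mul_le_mul_right hres (pow_pos ht0 n)
  have hexp : a - 1/2 = σ + 3/2 := by simp [ha]; ring
  rw [hexp] at this
  exact this
end

section
/- For every η > 0 and every ε > 0 there exists a sequence of positive real numbers r_m → ∞ such that max_{|s|=r_m} |ζ(s)| ≥ η · Γ(r_m)/(2π + ε)^{r_m} for all m. -/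
open Filter Real

lemma one_le_abs_zeta_real {x : ℝ} (hx : 1 < x) :
    1 ≤ ‖riemannZeta x‖ := by
  have hre : 1 < (x : ℂ).re := by simpa using hx
  rw [zeta_eq_tsum_one_div_nat_add_one_cpow hre]
  have hcast : ∀ n : ℕ, (1 / (n + 1 : ℂ) ^ (x : ℂ)) = ((1 / (n + 1 : ℝ) ^ x : ℝ) : ℂ) := by
    intro n
    rw [show ((n : ℂ) + 1) = (((n : ℝ) + 1 : ℝ) : ℂ) by push_cast; ring,
      ← Complex.ofReal_cpow (by positivity)]
    push_cast
    rfl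
  simp_rw [hcast]
  rw [← Complex.ofReal_tsum, Complex.norm_real, Real.norm_eq_abs]
  have hsum : Summable (fun n : ℕ => 1 / ((n : ℝ) + 1) ^ x) := by
    have := (Real.summable_one_div_nat_rpow (p := x)).mpr hx
    have := (summable_nat_add_iff 1).mpr this
    simpa using this
  have h0 : 1 ≤ ∑' n : ℕ, 1 / ((n : ℝ) + 1) ^ x := by
    have := Summable.le_tsum hsum 0 (fun n _ => by positivity)
    simpa using this
  calc (1:ℝ) ≤ _ := h0
    _ ≤ |∑' n : ℕ, 1 / ((n : ℝ) + 1) ^ x| := le_abs_self _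

lemma abs_zeta_neg_eq (k : ℕ) :
    ‖riemannZeta (((-(2 * (k:ℝ) + 1/2)) : ℝ) : ℂ)‖ =
      2 * (2*π) ^ (-(1 + (2 * (k:ℝ) + 1/2))) * Real.Gamma (1 + (2 * (k:ℝ) + 1/2)) * (√2/2)
        * ‖riemannZeta (((1 + (2 * (k:ℝ) + 1/2)) : ℝ) : ℂ)‖ := by
  set r : ℝ := 2 * (k:ℝ) + 1/2 with hr
  have hr0 : 0 < r := by positivity
  have h1 : ((-r : ℝ) : ℂ) = 1 - ((1 + r : ℝ) : ℂ) := by push_cast; ring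
  have hs : ∀ n : ℕ, ((1 + r : ℝ) : ℂ) ≠ -n := by
    intro n h
    have h' : (1 + r : ℝ) = -(n : ℝ) := by exact_mod_cast h
    have : (0:ℝ) ≤ (n:ℝ) := Nat.cast_nonneg n
    linarith
  have hs' : ((1 + r : ℝ) : ℂ) ≠ 1 := by
    intro h
    have : (1 + r : ℝ) = 1 := by exact_mod_cast h
    linarith
  have e2 : ‖(2:ℂ)‖ = 2 := by simp
  have epow : ‖(2*(π:ℂ)) ^ (-((1+r:ℝ):ℂ))‖ = (2*π)^(-(1+r)) := by
    rw [show (2*(π:ℂ)) = (((2*π:ℝ)):ℂ) by push_cast; ring,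
      show (-((1+r:ℝ):ℂ)) = ((-(1+r):ℝ):ℂ) by push_cast; ring,
      ← Complex.ofReal_cpow (by positivity) _, Complex.norm_real, Real.norm_eq_abs,
      abs_of_pos (Real.rpow_pos_of_pos (by positivity) _)]
  have egamma : ‖Complex.Gamma ((1+r:ℝ):ℂ)‖ = Real.Gamma (1+r) := by
    rw [Complex.Gamma_ofReal, Complex.norm_real, Real.norm_eq_abs,
      abs_of_pos (Real.Gamma_pos_of_pos (by positivity))]
  have ecos : ‖Complex.cos ((π:ℂ) * ((1+r:ℝ):ℂ) / 2)‖ = √2/2 := by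
    rw [show ((π:ℂ) * ((1 + r : ℝ) : ℂ) / 2) = ((π * (1+r) / 2 : ℝ) : ℂ) by push_cast; ring,
      ← Complex.ofReal_cos, Complex.norm_real, Real.norm_eq_abs]
    have harg : π * (1 + r) / 2 = 3 * π / 4 + (k:ℝ) * π := by rw [hr]; ring
    rw [harg, Real.cos_add_nat_mul_pi,
      show 3 * π / 4 = π - π/4 by ring, Real.cos_pi_sub, Real.cos_pi_div_four]
    rw [abs_mul, abs_neg, abs_pow, abs_neg, abs_one, one_pow, one_mul,
      abs_of_pos (by positivity : (0:ℝ) < √2/2)]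
  rw [h1, riemannZeta_one_sub hs hs', norm_mul, norm_mul, norm_mul, norm_mul, e2, epow, egamma, ecos]

lemma final_ineq (η ε : ℝ) (hη : 0 < η) (hε : 0 < ε) (r : ℝ) (hr0 : 0 < r)
    (hηr : 2 * π * η ≤ r) (Z : ℝ) (hZ : 1 ≤ Z) :
    η * Real.Gamma r / (2 * π + ε) ^ r ≤
      2 * (2*π) ^ (-(1 + r)) * Real.Gamma (1 + r) * (√2/2) * Z := by
  have hπ : (0:ℝ) < 2 * π := by positivity
  set G := Real.Gamma r with hG
  have hG0 : 0 < G := Real.Gamma_pos_of_pos hr0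
  set P := (2*π) ^ r with hP
  set Q := (2*π + ε) ^ r with hQ
  have hP0 : 0 < P := Real.rpow_pos_of_pos hπ r
  have hQ0 : 0 < Q := Real.rpow_pos_of_pos (by positivity) r
  have hPQ : P ≤ Q := Real.rpow_le_rpow hπ.le (by linarith) hr0.le
  have hGam : Real.Gamma (1 + r) = r * G := by
    rw [add_comm, Real.Gamma_add_one hr0.ne']
  have hexp : (2*π) ^ (-(1 + r)) = P⁻¹ * (2*π)⁻¹ := by
    rw [show -(1+r) = (-r) + (-1) by ring, Real.rpow_add hπ, Real.rpow_neg hπ.le,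
      Real.rpow_neg_one]
  rw [hGam, hexp]
  have hs2 : (1:ℝ) ≤ √2 := by
    rw [show (1:ℝ) = √1 by simp]
    exact Real.sqrt_le_sqrt (by norm_num)
  have step1 : η * G / Q ≤ η * G / P := by gcongr
  have step2 : η * G / P ≤ r / (2*π) * G / P := by
    gcongr
    rw [le_div_iff₀ hπ]
    linarith
  have step3 : r / (2*π) * G / P ≤ 2 * (P⁻¹ * (2*π)⁻¹) * (r * G) * (√2/2) * Z := by
    have heq : 2 * (P⁻¹ * (2*π)⁻¹) * (r * G) * (√2/2) * Z = (√2 * Z) * (r / (2*π) * G / P) := by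
      field_simp
    rw [heq]
    have h1 : (1:ℝ) ≤ √2 * Z := by nlinarith
    exact le_mul_of_one_le_left (by positivity) h1
  calc η * G / Q ≤ η * G / P := step1
    _ ≤ r / (2*π) * G / P := step2
    _ ≤ _ := step3

/-- The growth bound `Γ(r)/(2π)^r` for `ζ` is sharp: for every `η, ε > 0` there is a
sequence `r_m → ∞` with `max_{|s|=r_m} |ζ(s)| ≥ η · Γ(r_m)/(2π+ε)^{r_m}`. -/
theorem riemannZeta_circle_growth_sharp :
    ∀ η : ℝ, 0 < η → ∀ ε : ℝ, 0 < ε →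
      ∃ r : ℕ → ℝ, (∀ m, 0 < r m) ∧ Tendsto r atTop atTop ∧
        ∀ m, ∃ s : ℂ, ‖s‖ = r m ∧
          η * Real.Gamma (r m) / (2 * Real.pi + ε) ^ (r m) ≤ ‖riemannZeta s‖ := by
  intro η hη ε hε
  set N : ℕ := ⌈π * η⌉₊ + 1 with hN
  refine ⟨fun m => 2 * ((m + N : ℕ) : ℝ) + 1/2, fun m => by positivity, ?_, ?_⟩
  · apply tendsto_atTop_mono (fun m => ?_) (tendsto_natCast_atTop_atTop (R := ℝ))
    push_cast
    linarith [Nat.cast_nonneg (α := ℝ) N]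
  · intro m
    set k : ℕ := m + N with hk
    set r : ℝ := 2 * (k:ℝ) + 1/2 with hr
    have hr0 : 0 < r := by positivity
    refine ⟨((-r : ℝ) : ℂ), ?_, ?_⟩
    · rw [Complex.norm_real, Real.norm_eq_abs, abs_neg, abs_of_pos hr0]
    · have hNη : π * η ≤ (N:ℝ) := by
        rw [hN]
        push_cast
        linarith [Nat.le_ceil (π * η)]
      have hkN : (N:ℝ) ≤ (k:ℝ) := by
        rw [hk]
        push_cast
        linarith [Nat.cast_nonneg (α := ℝ) m]
      have hηr : 2 * π * η ≤ r := by rw [hr]; nlinarith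
      have hZ : 1 ≤ ‖riemannZeta ((1 + r : ℝ) : ℂ)‖ :=
        one_le_abs_zeta_real (by linarith)
      have := final_ineq η ε hη hε r hr0 hηr _ hZ
      rw [hr] at this ⊢
      rw [abs_zeta_neg_eq k]
      exact this
end
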